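/- arXiv:2511.15519 — 5 statements merged into one kernel-verified Lean document; each statement's English description precedes it below -/
import Mathlib

section
/- Let p, a, b ∈ ℂ with |p| < 1 and a ≠ 0, b ≠ 0, and let ω = exp(2πi/3). Then (∑_{m,n∈ℤ} ω^{m−n} p^{3(m²+mn+n²+m+n)+1} a^{3m+1} b^{3n+1})³ + (∑_{m,n∈ℤ} p^{3(m²+mn+n²)} a^{3m} b^{3n})³ = (∑_{m,n∈ℤ} ω^{m−n} p^{3(m²+mn+n²)} a^{3m} b^{3n})³ + (∑_{m,n∈ℤ} p^{3(m²+mn+n²+m+n)+1} a^{3m+1} b^{3n+1})³. (This is Schultz's two-variable generalization of Borweins' cubic identity, written with q = p³, x = a³, y = b³ to clear the fractional exponents q^{(m+1/3)²+(m+1/3)(n+1/3)+(n+1/3)²} x^{m+1/3} y^{n+1/3} = p^{3(m²+mn+n²+m+n)+1} a^{3m+1} b^{3n+1}.) -/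
open Complex Filter

noncomputable section

namespace SchultzAux

abbrev ι : Type := ℤ × ℤ
abbrev ι3 : Type := ι × ι × ι

/-! ### Summability lemmas -/

lemma sum_nat (r C : ℝ) (hr0 : 0 < r) (hr1 : r < 1) (hC : 0 < C) :
    Summable (fun n : ℕ => r ^ (n ^ 2) * C ^ n) := by
  apply summable_of_ratio_test_tendsto_lt_one (l := 0) one_pos
  · exact Eventually.of_forall fun n => by positivity
  · have hoo : (fun n : ℕ => ‖r ^ ((n+1) ^ 2) * C ^ (n+1)‖ / ‖r ^ (n ^ 2) * C ^ n‖)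
        = fun n : ℕ => (r ^ 2) ^ n * (r * C) := by
      funext n
      rw [Real.norm_of_nonneg (by positivity), Real.norm_of_nonneg (by positivity),
        div_eq_iff (by positivity), show (n+1)^2 = n^2 + 2*n + 1 by ring]
      rw [pow_add, pow_add, pow_mul, pow_succ]
      ring
    rw [hoo]
    simpa using (tendsto_pow_atTop_nhds_zero_of_lt_one (by positivity)
      (by nlinarith)).mul_const (r * C)

lemma sum_int (r C : ℝ) (hr0 : 0 < r) (hr1 : r < 1) (hC : 0 < C) :
    Summable (fun n : ℤ => r ^ (n ^ 2) * C ^ n) := by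
  apply Summable.of_nat_of_neg
  · have h := sum_nat r C hr0 hr1 hC
    apply h.congr
    intro n
    rw [show ((n : ℤ) ^ 2) = ((n ^ 2 : ℕ) : ℤ) by push_cast; ring, zpow_natCast, zpow_natCast]
  · have h := sum_nat r C⁻¹ hr0 hr1 (by positivity)
    apply h.congr
    intro n
    rw [show ((-n : ℤ) ^ 2) = ((n ^ 2 : ℕ) : ℤ) by push_cast; ring, zpow_natCast,
      zpow_neg, zpow_natCast, inv_pow]

lemma sum_Q (r A B : ℝ) (hr0 : 0 < r) (hr1 : r < 1) (hA : 0 < A) (hB : 0 < B) :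
    Summable (fun z : ℤ × ℤ => r ^ (z.1 ^ 2 + z.1 * z.2 + z.2 ^ 2) * A ^ z.1 * B ^ z.2) := by
  set s := Real.sqrt r with hs
  have hs0 : 0 < s := Real.sqrt_pos.mpr hr0
  have hs1 : s < 1 := by
    rw [hs]
    nlinarith [Real.sq_sqrt hr0.le, Real.sqrt_nonneg r]
  have hr : r = s ^ (2:ℤ) := by
    rw [hs, zpow_two, Real.mul_self_sqrt hr0.le]
  have hprod : Summable (fun z : ℤ × ℤ => (s ^ (z.1 ^ 2) * A ^ z.1) * (s ^ (z.2 ^ 2) * B ^ z.2)) :=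
    (sum_int s A hs0 hs1 hA).mul_of_nonneg (sum_int s B hs0 hs1 hB)
      (fun n => by positivity) (fun n => by positivity)
  apply Summable.of_nonneg_of_le (fun z => by positivity) _ hprod
  intro ⟨m, n⟩
  have key : r ^ (m ^ 2 + m * n + n ^ 2) ≤ s ^ (m ^ 2) * s ^ (n ^ 2) := by
    rw [hr, ← zpow_mul, ← zpow_add₀ hs0.ne']
    exact zpow_le_zpow_right_of_le_one₀ hs0 hs1.le (by nlinarith [sq_nonneg (m + n)])
  calc r ^ (m ^ 2 + m * n + n ^ 2) * A ^ m * B ^ n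
      ≤ (s ^ (m ^ 2) * s ^ (n ^ 2)) * A ^ m * B ^ n := by
        have hA' : (0:ℝ) < A ^ m := by positivity
        have hB' : (0:ℝ) < B ^ n := by positivity
        exact mul_le_mul_of_nonneg_right (mul_le_mul_of_nonneg_right key hA'.le) hB'.le
    _ = (s ^ (m ^ 2) * A ^ m) * (s ^ (n ^ 2) * B ^ n) := by ring

/-! ### Term functions -/

def tA (p a b : ℂ) (z : ι) : ℂ :=
  p ^ (3 * (z.1 ^ 2 + z.1 * z.2 + z.2 ^ 2)) * a ^ (3 * z.1) * b ^ (3 * z.2)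

def tC (p a b : ℂ) (z : ι) : ℂ :=
  p ^ (3 * (z.1 ^ 2 + z.1 * z.2 + z.2 ^ 2 + z.1 + z.2) + 1) * a ^ (3 * z.1 + 1) * b ^ (3 * z.2 + 1)

def tB (p a b ω : ℂ) (z : ι) : ℂ :=
  ω ^ (z.1 - z.2) * p ^ (3 * (z.1 ^ 2 + z.1 * z.2 + z.2 ^ 2)) * a ^ (3 * z.1) * b ^ (3 * z.2)

def tD (p a b ω : ℂ) (z : ι) : ℂ :=
  ω ^ (z.1 - z.2) * p ^ (3 * (z.1 ^ 2 + z.1 * z.2 + z.2 ^ 2 + z.1 + z.2) + 1) * a ^ (3 * z.1 + 1)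
    * b ^ (3 * z.2 + 1)

lemma tB_eq (p a b ω : ℂ) (z : ι) : tB p a b ω z = ω ^ (z.1 - z.2) * tA p a b z := by
  simp only [tA, tB]; ring

lemma tD_eq (p a b ω : ℂ) (z : ι) : tD p a b ω z = ω ^ (z.1 - z.2) * tC p a b z := by
  simp only [tC, tD]; ring

variable {p a b ω : ℂ}

lemma zpow33 (x : ℝ) (k : ℤ) : (x ^ (3:ℕ)) ^ k = x ^ (3 * k) := by
  rw [← zpow_natCast x 3, ← zpow_mul]
  norm_num

lemma normA (hp0 : p ≠ 0) (hp : ‖p‖ < 1) (ha : a ≠ 0) (hb : b ≠ 0) :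
    Summable (fun z : ι => ‖tA p a b z‖) := by
  have hp' : (0:ℝ) < ‖p‖ := norm_pos_iff.mpr hp0
  have ha' : (0:ℝ) < ‖a‖ := norm_pos_iff.mpr ha
  have hb' : (0:ℝ) < ‖b‖ := norm_pos_iff.mpr hb
  have h := sum_Q (‖p‖ ^ (3:ℕ)) (‖a‖ ^ (3:ℕ)) (‖b‖ ^ (3:ℕ))
    (by positivity)
    (by
      calc ‖p‖ ^ (3:ℕ) < 1 ^ (3:ℕ) := by
            apply pow_lt_pow_left₀ hp (norm_nonneg p) (by norm_num)
        _ = 1 := one_pow 3)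
    (by positivity) (by positivity)
  apply h.congr
  intro ⟨m, n⟩
  simp only [tA, norm_mul, norm_zpow]
  rw [zpow33, zpow33, zpow33]

lemma normC (hp0 : p ≠ 0) (hp : ‖p‖ < 1) (ha : a ≠ 0) (hb : b ≠ 0) :
    Summable (fun z : ι => ‖tC p a b z‖) := by
  have hp' : (0:ℝ) < ‖p‖ := norm_pos_iff.mpr hp0
  have ha' : (0:ℝ) < ‖a‖ := norm_pos_iff.mpr ha
  have hb' : (0:ℝ) < ‖b‖ := norm_pos_iff.mpr hb
  have h := sum_Q (‖p‖ ^ (3:ℕ)) (‖p‖ ^ (3:ℕ) * ‖a‖ ^ (3:ℕ)) (‖p‖ ^ (3:ℕ) * ‖b‖ ^ (3:ℕ))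
    (by positivity)
    (by
      calc ‖p‖ ^ (3:ℕ) < 1 ^ (3:ℕ) := by
            apply pow_lt_pow_left₀ hp (norm_nonneg p) (by norm_num)
        _ = 1 := one_pow 3)
    (by positivity) (by positivity)
  have h2 := h.mul_left (‖p‖ * ‖a‖ * ‖b‖)
  apply h2.congr
  intro ⟨m, n⟩
  simp only [tC, norm_mul, norm_zpow]
  rw [show (3 * (m ^ 2 + m * n + n ^ 2 + m + n) + 1 : ℤ)
      = 3 * (m ^ 2 + m * n + n ^ 2) + 3 * m + 3 * n + 1 by ring]
  rw [zpow_add₀ hp'.ne', zpow_add₀ hp'.ne', zpow_add₀ hp'.ne', zpow_one,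
    zpow_add₀ ha'.ne', zpow_add₀ hb'.ne', zpow_one, zpow_one]
  rw [mul_zpow, mul_zpow, zpow33, zpow33, zpow33, zpow33, zpow33]
  ring

lemma normB (hω1 : ‖ω‖ = 1) (h : Summable (fun z : ι => ‖tA p a b z‖)) :
    Summable (fun z : ι => ‖tB p a b ω z‖) := by
  apply h.congr
  intro z
  rw [tB_eq, norm_mul, norm_zpow, hω1, one_zpow, one_mul]

lemma normD (hω1 : ‖ω‖ = 1) (h : Summable (fun z : ι => ‖tC p a b z‖)) :
    Summable (fun z : ι => ‖tD p a b ω z‖) := by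
  apply h.congr
  intro z
  rw [tD_eq, norm_mul, norm_zpow, hω1, one_zpow, one_mul]

/-! ### The bijection -/

def Φf : ι3 → ι3
  | ((m1,n1),(m2,n2),(m3,n3)) =>
    if (m1+m2+m3-n1-n2-n3) % 3 = 1 then
      ((n1 + (m1+m2+m3-n1-n2-n3-1)/3, n1+n2+n3 + (m1+m2+m3-n1-n2-n3-1)/3 - m1 - n1),
       (n2 + (m1+m2+m3-n1-n2-n3-1)/3, n1+n2+n3 + (m1+m2+m3-n1-n2-n3-1)/3 - m2 - n2),
       (n3 + (m1+m2+m3-n1-n2-n3-1)/3, n1+n2+n3 + (m1+m2+m3-n1-n2-n3-1)/3 - m3 - n3))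
    else if (m1+m2+m3-n1-n2-n3) % 3 = 2 then
      ((n1+n2+n3 + 2*((m1+m2+m3-n1-n2-n3-2)/3) + 1 - m1 - n1, m1 - (m1+m2+m3-n1-n2-n3-2)/3 - 1),
       (n1+n2+n3 + 2*((m1+m2+m3-n1-n2-n3-2)/3) + 1 - m2 - n2, m2 - (m1+m2+m3-n1-n2-n3-2)/3 - 1),
       (n1+n2+n3 + 2*((m1+m2+m3-n1-n2-n3-2)/3) + 1 - m3 - n3, m3 - (m1+m2+m3-n1-n2-n3-2)/3 - 1))
    else ((m1,n1),(m2,n2),(m3,n3))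

def Ψf : ι3 → ι3
  | ((m1,n1),(m2,n2),(m3,n3)) =>
    if (m1+m2+m3-n1-n2-n3) % 3 = 1 then
      ((n1+n2+n3 + 1 + 2*((m1+m2+m3-n1-n2-n3-1)/3) - m1 - n1, m1 - (m1+m2+m3-n1-n2-n3-1)/3),
       (n1+n2+n3 + 1 + 2*((m1+m2+m3-n1-n2-n3-1)/3) - m2 - n2, m2 - (m1+m2+m3-n1-n2-n3-1)/3),
       (n1+n2+n3 + 1 + 2*((m1+m2+m3-n1-n2-n3-1)/3) - m3 - n3, m3 - (m1+m2+m3-n1-n2-n3-1)/3))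
    else if (m1+m2+m3-n1-n2-n3) % 3 = 2 then
      ((n1 + (m1+m2+m3-n1-n2-n3-2)/3 + 1,
        n1+n2+n3 + (m1+m2+m3-n1-n2-n3-2)/3 + 1 - m1 - n1),
       (n2 + (m1+m2+m3-n1-n2-n3-2)/3 + 1,
        n1+n2+n3 + (m1+m2+m3-n1-n2-n3-2)/3 + 1 - m2 - n2),
       (n3 + (m1+m2+m3-n1-n2-n3-2)/3 + 1,
        n1+n2+n3 + (m1+m2+m3-n1-n2-n3-2)/3 + 1 - m3 - n3))
    else ((m1,n1),(m2,n2),(m3,n3))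

lemma Φf_eq0 (m1 n1 m2 n2 m3 n3 : ℤ) (h : (m1+m2+m3-n1-n2-n3) % 3 = 0) :
    Φf ((m1,n1),(m2,n2),(m3,n3)) = ((m1,n1),(m2,n2),(m3,n3)) := by
  simp only [Φf]
  rw [if_neg (by omega), if_neg (by omega)]

lemma Φf_eq1 (m1 n1 m2 n2 m3 n3 d : ℤ) (h : m1+m2+m3-n1-n2-n3 = 3*d+1) :
    Φf ((m1,n1),(m2,n2),(m3,n3)) =
      ((n1 + d, n1+n2+n3 + d - m1 - n1),
       (n2 + d, n1+n2+n3 + d - m2 - n2),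
       (n3 + d, n1+n2+n3 + d - m3 - n3)) := by
  simp only [Φf]
  rw [if_pos (by omega)]
  simp only [Prod.mk.injEq]
  omega

lemma Φf_eq2 (m1 n1 m2 n2 m3 n3 d : ℤ) (h : m1+m2+m3-n1-n2-n3 = 3*d+2) :
    Φf ((m1,n1),(m2,n2),(m3,n3)) =
      ((n1+n2+n3 + 2*d + 1 - m1 - n1, m1 - d - 1),
       (n1+n2+n3 + 2*d + 1 - m2 - n2, m2 - d - 1),
       (n1+n2+n3 + 2*d + 1 - m3 - n3, m3 - d - 1)) := by
  simp only [Φf]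
  rw [if_neg (by omega), if_pos (by omega)]
  simp only [Prod.mk.injEq]
  omega

lemma Ψf_eq0 (m1 n1 m2 n2 m3 n3 : ℤ) (h : (m1+m2+m3-n1-n2-n3) % 3 = 0) :
    Ψf ((m1,n1),(m2,n2),(m3,n3)) = ((m1,n1),(m2,n2),(m3,n3)) := by
  simp only [Ψf]
  rw [if_neg (by omega), if_neg (by omega)]

lemma Ψf_eq1 (m1 n1 m2 n2 m3 n3 d : ℤ) (h : m1+m2+m3-n1-n2-n3 = 3*d+1) :
    Ψf ((m1,n1),(m2,n2),(m3,n3)) =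
      ((n1+n2+n3 + 1 + 2*d - m1 - n1, m1 - d),
       (n1+n2+n3 + 1 + 2*d - m2 - n2, m2 - d),
       (n1+n2+n3 + 1 + 2*d - m3 - n3, m3 - d)) := by
  simp only [Ψf]
  rw [if_pos (by omega)]
  simp only [Prod.mk.injEq]
  omega

lemma Ψf_eq2 (m1 n1 m2 n2 m3 n3 d : ℤ) (h : m1+m2+m3-n1-n2-n3 = 3*d+2) :
    Ψf ((m1,n1),(m2,n2),(m3,n3)) =
      ((n1 + d + 1, n1+n2+n3 + d + 1 - m1 - n1),
       (n2 + d + 1, n1+n2+n3 + d + 1 - m2 - n2),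
       (n3 + d + 1, n1+n2+n3 + d + 1 - m3 - n3)) := by
  simp only [Ψf]
  rw [if_neg (by omega), if_pos (by omega)]
  simp only [Prod.mk.injEq]
  omega

def Φe : ι3 ≃ ι3 where
  toFun := Φf
  invFun := Ψf
  left_inv := by
    rintro ⟨⟨m1,n1⟩,⟨m2,n2⟩,⟨m3,n3⟩⟩
    have h0 : (m1+m2+m3-n1-n2-n3) % 3 = 0 ∨ (m1+m2+m3-n1-n2-n3) % 3 = 1
        ∨ (m1+m2+m3-n1-n2-n3) % 3 = 2 := by omega
    rcases h0 with h | h | h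
    · rw [Φf_eq0 _ _ _ _ _ _ h, Ψf_eq0 _ _ _ _ _ _ h]
    · obtain ⟨d, hd⟩ : ∃ d, m1+m2+m3-n1-n2-n3 = 3*d+1 :=
        ⟨(m1+m2+m3-n1-n2-n3-1)/3, by omega⟩
      rw [Φf_eq1 _ _ _ _ _ _ d hd, Ψf_eq1 _ _ _ _ _ _ d (by omega)]
      simp only [Prod.mk.injEq]
      omega
    · obtain ⟨d, hd⟩ : ∃ d, m1+m2+m3-n1-n2-n3 = 3*d+2 :=
        ⟨(m1+m2+m3-n1-n2-n3-2)/3, by omega⟩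
      rw [Φf_eq2 _ _ _ _ _ _ d hd, Ψf_eq2 _ _ _ _ _ _ d (by omega)]
      simp only [Prod.mk.injEq]
      omega
  right_inv := by
    rintro ⟨⟨m1,n1⟩,⟨m2,n2⟩,⟨m3,n3⟩⟩
    have h0 : (m1+m2+m3-n1-n2-n3) % 3 = 0 ∨ (m1+m2+m3-n1-n2-n3) % 3 = 1
        ∨ (m1+m2+m3-n1-n2-n3) % 3 = 2 := by omega
    rcases h0 with h | h | h
    · rw [Ψf_eq0 _ _ _ _ _ _ h, Φf_eq0 _ _ _ _ _ _ h]
    · obtain ⟨d, hd⟩ : ∃ d, m1+m2+m3-n1-n2-n3 = 3*d+1 :=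
        ⟨(m1+m2+m3-n1-n2-n3-1)/3, by omega⟩
      rw [Ψf_eq1 _ _ _ _ _ _ d hd, Φf_eq1 _ _ _ _ _ _ d (by omega)]
      simp only [Prod.mk.injEq]
      omega
    · obtain ⟨d, hd⟩ : ∃ d, m1+m2+m3-n1-n2-n3 = 3*d+2 :=
        ⟨(m1+m2+m3-n1-n2-n3-2)/3, by omega⟩
      rw [Ψf_eq2 _ _ _ _ _ _ d hd, Φf_eq2 _ _ _ _ _ _ d (by omega)]
      simp only [Prod.mk.injEq]
      omega

/-! ### The key termwise identity -/

def sZ (z : ι3) : ℤ := z.1.1 + z.2.1.1 + z.2.2.1 - (z.1.2 + z.2.1.2 + z.2.2.2)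

def FF (p a b : ℂ) (z : ι3) : ℂ := tA p a b z.1 * (tA p a b z.2.1 * tA p a b z.2.2)

def GG (p a b : ℂ) (z : ι3) : ℂ := tC p a b z.1 * (tC p a b z.2.1 * tC p a b z.2.2)

lemma prod3 (hp : p ≠ 0) (ha : a ≠ 0) (hb : b ≠ 0)
    {e1 e2 e3 f1 f2 f3 g1 g2 g3 e1' e2' e3' f1' f2' f3' g1' g2' g3' : ℤ}
    (he : e1+e2+e3 = e1'+e2'+e3') (hf : f1+f2+f3 = f1'+f2'+f3')
    (hg : g1+g2+g3 = g1'+g2'+g3') :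
    p^e1*a^f1*b^g1 * (p^e2*a^f2*b^g2 * (p^e3*a^f3*b^g3))
      = p^e1'*a^f1'*b^g1' * (p^e2'*a^f2'*b^g2' * (p^e3'*a^f3'*b^g3')) := by
  trans p^(e1+e2+e3) * a^(f1+f2+f3) * b^(g1+g2+g3)
  · rw [zpow_add₀ hp, zpow_add₀ hp, zpow_add₀ ha, zpow_add₀ ha, zpow_add₀ hb, zpow_add₀ hb]
    ring
  · rw [he, hf, hg, zpow_add₀ hp, zpow_add₀ hp, zpow_add₀ ha, zpow_add₀ ha,
      zpow_add₀ hb, zpow_add₀ hb]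
    ring

lemma zpow_three_dvd (hω3 : ω ^ (3:ℕ) = 1) (s : ℤ) (h : (3:ℤ) ∣ s) :
    ω ^ s = 1 := by
  obtain ⟨k, rfl⟩ := h
  rw [zpow_mul, show ((3:ℤ)) = ((3:ℕ):ℤ) by norm_num, zpow_natCast, hω3, one_zpow]

lemma key (hp0 : p ≠ 0) (ha : a ≠ 0) (hb : b ≠ 0)
    (hω3 : ω ^ (3:ℕ) = 1) (z : ι3) :
    (1 - ω ^ sZ z) * FF p a b z = (1 - ω ^ sZ (Φf z)) * GG p a b (Φf z) := by
  obtain ⟨⟨m1,n1⟩,⟨m2,n2⟩,⟨m3,n3⟩⟩ := z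
  have h0 : (m1+m2+m3-n1-n2-n3) % 3 = 0 ∨ (m1+m2+m3-n1-n2-n3) % 3 = 1
      ∨ (m1+m2+m3-n1-n2-n3) % 3 = 2 := by omega
  rcases h0 with h | h | h
  · rw [Φf_eq0 _ _ _ _ _ _ h]
    have : ω ^ sZ ((m1,n1),(m2,n2),(m3,n3)) = 1 :=
      zpow_three_dvd hω3 _ (by simp only [sZ]; omega)
    rw [this]
    norm_num
  · obtain ⟨d, hd⟩ : ∃ d, m1+m2+m3-n1-n2-n3 = 3*d+1 :=
      ⟨(m1+m2+m3-n1-n2-n3-1)/3, by omega⟩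
    rw [Φf_eq1 _ _ _ _ _ _ d hd]
    have hs : sZ ((n1 + d, n1+n2+n3 + d - m1 - n1),
       (n2 + d, n1+n2+n3 + d - m2 - n2),
       (n3 + d, n1+n2+n3 + d - m3 - n3)) = sZ ((m1,n1),(m2,n2),(m3,n3)) := by
      simp only [sZ]
      omega
    rw [hs]
    congr 1
    simp only [FF, GG, tA, tC]
    exact prod3 hp0 ha hb
      (by have h3 : m3 = 3*d+1 - m1 - m2 + n1 + n2 + n3 := by omega
          subst h3; ring)
      (by omega) (by omega)
  · obtain ⟨d, hd⟩ : ∃ d, m1+m2+m3-n1-n2-n3 = 3*d+2 :=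
      ⟨(m1+m2+m3-n1-n2-n3-2)/3, by omega⟩
    rw [Φf_eq2 _ _ _ _ _ _ d hd]
    have hs : sZ ((n1+n2+n3 + 2*d + 1 - m1 - n1, m1 - d - 1),
       (n1+n2+n3 + 2*d + 1 - m2 - n2, m2 - d - 1),
       (n1+n2+n3 + 2*d + 1 - m3 - n3, m3 - d - 1)) = sZ ((m1,n1),(m2,n2),(m3,n3)) := by
      simp only [sZ]
      omega
    rw [hs]
    congr 1
    simp only [FF, GG, tA, tC]
    exact prod3 hp0 ha hb
      (by have h3 : m3 = 3*d+2 - m1 - m2 + n1 + n2 + n3 := by omega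
          subst h3; ring)
      (by omega) (by omega)

/-! ### Cubes of sums -/

lemma cube (f : ι → ℂ) (hf : Summable fun z => ‖f z‖) :
    (∑' z : ι, f z) ^ 3 = ∑' z : ι3, f z.1 * (f z.2.1 * f z.2.2) := by
  have h2 : ((∑' z : ι, f z) * (∑' z : ι, f z)) = ∑' w : ι × ι, f w.1 * f w.2 :=
    tsum_mul_tsum_of_summable_norm hf hf
  have h3 : (∑' z : ι, f z) * (∑' w : ι × ι, f w.1 * f w.2)
      = ∑' z : ι × ι × ι, f z.1 * (f z.2.1 * f z.2.2) :=
    tsum_mul_tsum_of_summable_norm hf (hf.mul_norm hf)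
  calc (∑' z : ι, f z)^3 = (∑' z : ι, f z) * ((∑' z : ι, f z) * (∑' z : ι, f z)) := by ring
  _ = ∑' z : ι3, f z.1 * (f z.2.1 * f z.2.2) := by rw [h2, h3]

lemma summ3 (f : ι → ℂ) (hf : Summable fun z => ‖f z‖) :
    Summable (fun z : ι3 => f z.1 * (f z.2.1 * f z.2.2)) := by
  have h1 : Summable (fun w : ι × ι => ‖f w.1 * f w.2‖) := hf.mul_norm hf
  have h2 := hf.mul_norm h1
  exact Summable.of_norm h2

lemma cubeB (hω0 : ω ≠ 0) (z : ι3) :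
    tB p a b ω z.1 * (tB p a b ω z.2.1 * tB p a b ω z.2.2) = ω ^ sZ z * FF p a b z := by
  obtain ⟨⟨m1,n1⟩,⟨m2,n2⟩,⟨m3,n3⟩⟩ := z
  simp only [tB_eq, FF, sZ]
  rw [show m1 + m2 + m3 - (n1 + n2 + n3) = (m1 - n1) + ((m2 - n2) + (m3 - n3)) by ring,
    zpow_add₀ hω0, zpow_add₀ hω0]
  ring

lemma cubeD (hω0 : ω ≠ 0) (z : ι3) :
    tD p a b ω z.1 * (tD p a b ω z.2.1 * tD p a b ω z.2.2) = ω ^ sZ z * GG p a b z := by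
  obtain ⟨⟨m1,n1⟩,⟨m2,n2⟩,⟨m3,n3⟩⟩ := z
  simp only [tD_eq, GG, sZ]
  rw [show m1 + m2 + m3 - (n1 + n2 + n3) = (m1 - n1) + ((m2 - n2) + (m3 - n3)) by ring,
    zpow_add₀ hω0, zpow_add₀ hω0]
  ring

end SchultzAux

end

open SchultzAux

/-- Schultz's two-variable generalization of Borweins' cubic identity
(written with `q = p³`, `x = a³`, `y = b³` to clear fractional exponents). -/
theorem schultz_identity (p a b ω : ℂ) (hp : ‖p‖ < 1)
    (ha : a ≠ 0) (hb : b ≠ 0)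
    (hω : ω = Complex.exp (2 * Real.pi * Complex.I / 3)) :
    (∑' m : ℤ, ∑' n : ℤ, ω ^ (m - n) *
        p ^ (3 * (m ^ 2 + m * n + n ^ 2 + m + n) + 1) * a ^ (3 * m + 1) * b ^ (3 * n + 1)) ^ 3
      + (∑' m : ℤ, ∑' n : ℤ,
          p ^ (3 * (m ^ 2 + m * n + n ^ 2)) * a ^ (3 * m) * b ^ (3 * n)) ^ 3
      = (∑' m : ℤ, ∑' n : ℤ, ω ^ (m - n) *
          p ^ (3 * (m ^ 2 + m * n + n ^ 2)) * a ^ (3 * m) * b ^ (3 * n)) ^ 3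
        + (∑' m : ℤ, ∑' n : ℤ,
            p ^ (3 * (m ^ 2 + m * n + n ^ 2 + m + n) + 1) * a ^ (3 * m + 1) * b ^ (3 * n + 1)) ^ 3 := by
  have hω0 : ω ≠ 0 := by rw [hω]; exact Complex.exp_ne_zero _
  have hω3 : ω ^ (3:ℕ) = 1 := by
    rw [hω, ← Complex.exp_nat_mul]
    rw [show ((3:ℕ):ℂ) * (2 * Real.pi * Complex.I / 3) = 2 * Real.pi * Complex.I by
      push_cast; ring]
    exact Complex.exp_two_pi_mul_I
  have hω1 : ‖ω‖ = 1 := by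
    rw [hω, Complex.norm_exp]
    rw [show (2 * (Real.pi:ℂ) * Complex.I / 3) = (2 * Real.pi / 3 : ℝ) * Complex.I by
      push_cast; ring]
    simp
  rcases eq_or_ne p 0 with rfl | hp0
  · -- degenerate case p = 0
    have hQ : ∀ m n : ℤ, ¬(m = 0 ∧ n = 0) → (3 * (m^2 + m*n + n^2) : ℤ) ≠ 0 := by
      intro m n h
      have h4 : 0 < 4 * (m^2 + m*n + n^2) := by
        rcases (by omega : m ≠ 0 ∨ n ≠ 0) with hm | hm
        · have h1 : 1 ≤ |m| := Int.one_le_abs hm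
          have h2 : 1 ≤ m^2 := by nlinarith [_root_.sq_abs m, abs_nonneg m]
          nlinarith [sq_nonneg (m + 2*n)]
        · have h1 : 1 ≤ |n| := Int.one_le_abs hm
          have h2 : 1 ≤ n^2 := by nlinarith [_root_.sq_abs n, abs_nonneg n]
          nlinarith [sq_nonneg (n + 2*m)]
      omega
    have hQC : ∀ m n : ℤ, (3 * (m^2 + m*n + n^2 + m + n) + 1 : ℤ) ≠ 0 := by
      intro m n
      intro hcon
      have := congrArg (· % 3) hcon
      omega
    have eA : (∑' m : ℤ, ∑' n : ℤ,
        (0:ℂ) ^ (3 * (m ^ 2 + m * n + n ^ 2)) * a ^ (3 * m) * b ^ (3 * n)) = 1 := by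
      rw [tsum_eq_single (0:ℤ) ?_]
      · rw [tsum_eq_single (0:ℤ) ?_]
        · norm_num
        · intro n hn
          rw [zero_zpow _ (hQ 0 n (by simp [hn])), zero_mul, zero_mul]
      · intro m hm
        have : ∀ n : ℤ, (0:ℂ) ^ (3 * (m ^ 2 + m * n + n ^ 2)) * a ^ (3 * m) * b ^ (3 * n) = 0 := by
          intro n
          rw [zero_zpow _ (hQ m n (by simp [hm])), zero_mul, zero_mul]
        rw [tsum_congr this, tsum_zero]
    have eB : (∑' m : ℤ, ∑' n : ℤ, ω ^ (m - n) *
        (0:ℂ) ^ (3 * (m ^ 2 + m * n + n ^ 2)) * a ^ (3 * m) * b ^ (3 * n)) = 1 := by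
      rw [tsum_eq_single (0:ℤ) ?_]
      · rw [tsum_eq_single (0:ℤ) ?_]
        · norm_num
        · intro n hn
          rw [zero_zpow _ (hQ 0 n (by simp [hn])), mul_zero, zero_mul, zero_mul]
      · intro m hm
        have : ∀ n : ℤ, ω ^ (m - n) *
            (0:ℂ) ^ (3 * (m ^ 2 + m * n + n ^ 2)) * a ^ (3 * m) * b ^ (3 * n) = 0 := by
          intro n
          rw [zero_zpow _ (hQ m n (by simp [hm])), mul_zero, zero_mul, zero_mul]
        rw [tsum_congr this, tsum_zero]
    have eC : (∑' m : ℤ, ∑' n : ℤ,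
        (0:ℂ) ^ (3 * (m ^ 2 + m * n + n ^ 2 + m + n) + 1) * a ^ (3 * m + 1) * b ^ (3 * n + 1))
        = 0 := by
      have : ∀ m n : ℤ,
          (0:ℂ) ^ (3 * (m ^ 2 + m * n + n ^ 2 + m + n) + 1) * a ^ (3 * m + 1) * b ^ (3 * n + 1)
          = 0 := by
        intro m n
        rw [zero_zpow _ (hQC m n), zero_mul, zero_mul]
      calc _ = ∑' (m : ℤ), ∑' (_ : ℤ), (0:ℂ) :=
            tsum_congr fun m => tsum_congr fun n => this m n
        _ = 0 := by simp
    have eD : (∑' m : ℤ, ∑' n : ℤ, ω ^ (m - n) *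
        (0:ℂ) ^ (3 * (m ^ 2 + m * n + n ^ 2 + m + n) + 1) * a ^ (3 * m + 1) * b ^ (3 * n + 1))
        = 0 := by
      have : ∀ m n : ℤ, ω ^ (m - n) *
          (0:ℂ) ^ (3 * (m ^ 2 + m * n + n ^ 2 + m + n) + 1) * a ^ (3 * m + 1) * b ^ (3 * n + 1)
          = 0 := by
        intro m n
        rw [zero_zpow _ (hQC m n), mul_zero, zero_mul, zero_mul]
      calc _ = ∑' (m : ℤ), ∑' (_ : ℤ), (0:ℂ) :=
            tsum_congr fun m => tsum_congr fun n => this m n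
        _ = 0 := by simp
    rw [eA, eB, eC, eD]
    norm_num
  · -- main case p ≠ 0
    have hA := normA hp0 hp ha hb
    have hC := normC hp0 hp ha hb
    have hB : Summable (fun z : ι => ‖tB p a b ω z‖) := normB hω1 hA
    have hD : Summable (fun z : ι => ‖tD p a b ω z‖) := normD hω1 hC
    have eA : (∑' m : ℤ, ∑' n : ℤ,
        p ^ (3 * (m ^ 2 + m * n + n ^ 2)) * a ^ (3 * m) * b ^ (3 * n))
        = ∑' z : ι, tA p a b z :=
      (tsum_congr fun m => tsum_congr fun n => (rfl :
        p ^ (3 * (m ^ 2 + m * n + n ^ 2)) * a ^ (3 * m) * b ^ (3 * n) = tA p a b (m, n))).trans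
      (Summable.tsum_prod' hA.of_norm hA.of_norm.prod_factor).symm
    have eB : (∑' m : ℤ, ∑' n : ℤ, ω ^ (m - n) *
        p ^ (3 * (m ^ 2 + m * n + n ^ 2)) * a ^ (3 * m) * b ^ (3 * n))
        = ∑' z : ι, tB p a b ω z :=
      (tsum_congr fun m => tsum_congr fun n => (rfl : ω ^ (m - n) *
        p ^ (3 * (m ^ 2 + m * n + n ^ 2)) * a ^ (3 * m) * b ^ (3 * n) = tB p a b ω (m, n))).trans
      (Summable.tsum_prod' hB.of_norm hB.of_norm.prod_factor).symm
    have eC : (∑' m : ℤ, ∑' n : ℤ,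
        p ^ (3 * (m ^ 2 + m * n + n ^ 2 + m + n) + 1) * a ^ (3 * m + 1) * b ^ (3 * n + 1))
        = ∑' z : ι, tC p a b z :=
      (tsum_congr fun m => tsum_congr fun n => (rfl :
        p ^ (3 * (m ^ 2 + m * n + n ^ 2 + m + n) + 1) * a ^ (3 * m + 1) * b ^ (3 * n + 1)
          = tC p a b (m, n))).trans
      (Summable.tsum_prod' hC.of_norm hC.of_norm.prod_factor).symm
    have eD : (∑' m : ℤ, ∑' n : ℤ, ω ^ (m - n) *
        p ^ (3 * (m ^ 2 + m * n + n ^ 2 + m + n) + 1) * a ^ (3 * m + 1) * b ^ (3 * n + 1))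
        = ∑' z : ι, tD p a b ω z :=
      (tsum_congr fun m => tsum_congr fun n => (rfl : ω ^ (m - n) *
        p ^ (3 * (m ^ 2 + m * n + n ^ 2 + m + n) + 1) * a ^ (3 * m + 1) * b ^ (3 * n + 1)
          = tD p a b ω (m, n))).trans
      (Summable.tsum_prod' hD.of_norm hD.of_norm.prod_factor).symm
    rw [eA, eB, eC, eD, cube _ hA, cube _ hB, cube _ hC, cube _ hD]
    rw [tsum_congr (cubeB hω0), tsum_congr (cubeD hω0),
      tsum_congr (f := fun z : ι3 => tA p a b z.1 * (tA p a b z.2.1 * tA p a b z.2.2))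
        (g := FF p a b) (fun z => by simp only [FF]),
      tsum_congr (f := fun z : ι3 => tC p a b z.1 * (tC p a b z.2.1 * tC p a b z.2.2))
        (g := GG p a b) (fun z => by simp only [GG])]
    -- summabilities on ι3
    have SF : Summable (fun z : ι3 => FF p a b z) := summ3 (tA p a b) hA
    have SG : Summable (fun z : ι3 => GG p a b z) := summ3 (tC p a b) hC
    have StF : Summable (fun z : ι3 => ω ^ sZ z * FF p a b z) :=
      (summ3 (tB p a b ω) hB).congr (cubeB hω0)
    have StG : Summable (fun z : ι3 => ω ^ sZ z * GG p a b z) :=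
      (summ3 (tD p a b ω) hD).congr (cubeD hω0)
    have hkey : (∑' z : ι3, (FF p a b z - ω ^ sZ z * FF p a b z))
        = ∑' z : ι3, (GG p a b z - ω ^ sZ z * GG p a b z) := by
      have h1 : ∀ z : ι3, FF p a b z - ω ^ sZ z * FF p a b z
          = (fun w => GG p a b w - ω ^ sZ w * GG p a b w) (Φe z) := by
        intro z
        have hk := key hp0 ha hb hω3 z
        simp only [Φe, Equiv.coe_fn_mk]
        linear_combination hk
      calc (∑' z : ι3, (FF p a b z - ω ^ sZ z * FF p a b z))
          = ∑' z : ι3, (fun w => GG p a b w - ω ^ sZ w * GG p a b w) (Φe z) :=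
            tsum_congr h1
        _ = ∑' w : ι3, (GG p a b w - ω ^ sZ w * GG p a b w) :=
            Φe.tsum_eq (fun w => GG p a b w - ω ^ sZ w * GG p a b w)
    rw [Summable.tsum_sub SF StF, Summable.tsum_sub SG StG] at hkey
    linear_combination hkey
end

section
/- Let q ∈ ℂ with |q| < 1 and ω = exp(2πi/3). Then ∑_{m,n∈ℤ} ω^{m−n} q^{m²+mn+n²+m+n} = 0. -/
open Complex

private def Efun (p : ℤ × ℤ) : ℤ :=
  p.1 ^ 2 + p.1 * p.2 + p.2 ^ 2 + p.1 + p.2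

private lemma Efun_nonneg (p : ℤ × ℤ) : 0 ≤ Efun p := by
  obtain ⟨m, n⟩ := p
  have h : 0 ≤ 12 * Efun (m, n) + 4 := by
    have h1 := sq_nonneg (2 * m + n + 1)
    have h2 := sq_nonneg (3 * n + 1)
    simp only [Efun]
    nlinarith
  omega

private lemma Efun_ge (p : ℤ × ℤ) : (p.1.natAbs : ℤ) + p.2.natAbs ≤ Efun p + 4 := by
  obtain ⟨m, n⟩ := p
  have hm : (m.natAbs : ℤ) = |m| := Int.abs_eq_natAbs m ▸ rfl
  have hn : (n.natAbs : ℤ) = |n| := Int.abs_eq_natAbs n ▸ rfl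
  simp only [Efun]
  rw [hm, hn]
  have h1 := sq_nonneg (|m| - 2)
  have h2 := sq_nonneg (|n| - 2)
  have h3 := sq_nonneg (m + n)
  have h4 : |m| ^ 2 = m ^ 2 := sq_abs m
  have h5 : |n| ^ 2 = n ^ 2 := sq_abs n
  have h6 : m ≤ |m| := le_abs_self m
  have h7 : n ≤ |n| := le_abs_self n
  nlinarith

set_option maxHeartbeats 1000000 in
/-- The theta series `∑ ω^{m-n} q^{m²+mn+n²+m+n}` vanishes identically. -/
theorem borwein_zero_sum (q ω : ℂ) (hq : ‖q‖ < 1)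
    (hω : ω = Complex.exp (2 * Real.pi * Complex.I / 3)) :
    (∑' m : ℤ, ∑' n : ℤ, ω ^ (m - n) * q ^ (m ^ 2 + m * n + n ^ 2 + m + n)) = 0 := by
  set f : ℤ × ℤ → ℂ := fun p => ω ^ (p.1 - p.2) * q ^ Efun p with hf
  -- basic facts about ω
  have hω0 : ω ≠ 0 := hω ▸ Complex.exp_ne_zero _
  have hωabs : ‖ω‖ = 1 := by
    rw [hω, Complex.norm_exp]
    norm_num [Complex.div_re, Complex.mul_re, Complex.mul_im]
  have hω3 : ω ^ (3 : ℤ) = 1 := by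
    rw [hω, ← Complex.exp_int_mul]
    rw [show (3 : ℤ) * (2 * ↑Real.pi * Complex.I / 3) = 2 * ↑Real.pi * Complex.I by push_cast; ring]
    exact Complex.exp_two_pi_mul_I
  have hω1 : ω ≠ 1 := by
    rw [hω]
    intro h
    rw [Complex.exp_eq_one_iff] at h
    obtain ⟨n, hn⟩ := h
    have hπ : (Real.pi : ℂ) ≠ 0 := by exact_mod_cast Real.pi_ne_zero
    have h2 : (2 : ℂ) * Real.pi * Complex.I ≠ 0 := by
      simp [hπ, Complex.I_ne_zero]
    have key : (n : ℂ) * 3 * (2 * Real.pi * Complex.I) = 1 * (2 * Real.pi * Complex.I) := by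
      linear_combination -3 * hn
    have h3 : (n : ℂ) * 3 = 1 := mul_right_cancel₀ h2 key
    have h4 : ((n * 3 : ℤ) : ℂ) = ((1 : ℤ) : ℂ) := by push_cast; exact h3
    have := Int.cast_injective h4
    omega
  -- summability
  set r : ℝ := ‖q‖ with hr
  set s : ℝ := max r (1/2) with hs
  have hs0 : 0 < s := lt_of_lt_of_le (by norm_num) (le_max_right _ _)
  have hs1 : s < 1 := max_lt hq (by norm_num)
  have hrs : r ≤ s := le_max_left _ _
  have hr0 : 0 ≤ r := norm_nonneg q
  have hbound : ∀ p : ℤ × ℤ, ‖f p‖ ≤ s⁻¹ ^ 4 * (s ^ p.1.natAbs * s ^ p.2.natAbs) := by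
    intro p
    have hE := Efun_nonneg p
    have h1 : ‖f p‖ = r ^ (Efun p).toNat := by
      simp only [hf, norm_mul, norm_zpow, map_zpow₀, hωabs, one_zpow, one_mul, ← hr]
      rw [← zpow_natCast r ((Efun p).toNat), Int.toNat_of_nonneg hE]
    have h2 : r ^ (Efun p).toNat ≤ s ^ (Efun p).toNat := pow_le_pow_left₀ hr0 hrs _
    have h3 : p.1.natAbs + p.2.natAbs ≤ (Efun p).toNat + 4 := by
      have := Efun_ge p
      omega
    have h4 : s ^ ((Efun p).toNat + 4) ≤ s ^ (p.1.natAbs + p.2.natAbs) :=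
      pow_le_pow_of_le_one hs0.le hs1.le h3
    have h5 : s ^ (Efun p).toNat = s⁻¹ ^ 4 * s ^ ((Efun p).toNat + 4) := by
      field_simp
      ring
    rw [h1]
    calc r ^ (Efun p).toNat ≤ s ^ (Efun p).toNat := h2
      _ = s⁻¹ ^ 4 * s ^ ((Efun p).toNat + 4) := h5
      _ ≤ s⁻¹ ^ 4 * s ^ (p.1.natAbs + p.2.natAbs) := by
          apply mul_le_mul_of_nonneg_left h4 (by positivity)
      _ = s⁻¹ ^ 4 * (s ^ p.1.natAbs * s ^ p.2.natAbs) := by rw [pow_add]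
  have hgeo : Summable (fun k : ℕ => s ^ k) := summable_geometric_of_lt_one hs0.le hs1
  have hint : Summable (fun m : ℤ => s ^ m.natAbs) := by
    apply Summable.of_nat_of_neg <;> simpa using hgeo
  have hsum2 : Summable (fun p : ℤ × ℤ => s ^ p.1.natAbs * s ^ p.2.natAbs) :=
    hint.mul_of_nonneg hint (fun _ => pow_nonneg hs0.le _) (fun _ => pow_nonneg hs0.le _)
  have hsum : Summable f :=
    Summable.of_norm_bounded (hsum2.mul_left _) hbound
  -- the reindexing equivalence
  let e : ℤ × ℤ ≃ ℤ × ℤ :=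
    { toFun := fun p => (p.2, -p.1 - p.2 - 1)
      invFun := fun p => (-p.1 - p.2 - 1, p.1)
      left_inv := by rintro ⟨a, b⟩; simp only [Prod.mk.injEq, and_true]; ring
      right_inv := by rintro ⟨a, b⟩; simp only [Prod.mk.injEq, true_and]; ring }
  have hfe : ∀ p : ℤ × ℤ, f (e p) = ω * f p := by
    rintro ⟨m, n⟩
    show ω ^ (n - (-m - n - 1)) * q ^ Efun (n, -m - n - 1) = ω * (ω ^ (m - n) * q ^ Efun (m, n))
    have hE : Efun (n, -m - n - 1) = Efun (m, n) := by simp only [Efun]; ring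
    have h1 : n - (-m - n - 1) = (m - n) + (3 * n + 1) := by ring
    have h2 : ω ^ (3 * n + 1) = ω := by
      rw [zpow_add₀ hω0, zpow_mul, hω3, one_zpow, zpow_one, one_mul]
    rw [hE, h1, zpow_add₀ hω0, h2]
    ring
  have hS : (∑' p : ℤ × ℤ, f p) = ω * ∑' p : ℤ × ℤ, f p := by
    conv_lhs => rw [← e.tsum_eq f]
    calc (∑' p : ℤ × ℤ, f (e p)) = ∑' p : ℤ × ℤ, ω * f p := tsum_congr hfe
      _ = ω * ∑' p : ℤ × ℤ, f p := tsum_mul_left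
  have hS0 : (∑' p : ℤ × ℤ, f p) = 0 := by
    have h10 : (1 - ω) * (∑' p : ℤ × ℤ, f p) = 0 := by linear_combination hS
    rcases mul_eq_zero.mp h10 with h1 | h1
    · exact absurd (by linear_combination -h1 : ω = 1) hω1
    · exact h1
  calc (∑' m : ℤ, ∑' n : ℤ, ω ^ (m - n) * q ^ (m ^ 2 + m * n + n ^ 2 + m + n))
      = ∑' p : ℤ × ℤ, f p := (Summable.tsum_prod' hsum hsum.prod_factor).symm
    _ = 0 := hS0
end

section
/- Let p, a, b ∈ ℂ with |p| < 1 and a ≠ 0, b ≠ 0. Then (∑_{m,n∈ℤ} (−1)^{m+n} p^{2(m²+n²+m+n)+1} a^{2m+1} b^{2n+1})² + (∑_{m,n∈ℤ} p^{2(m²+n²)} a^{2m} b^{2n})² = (∑_{m,n∈ℤ} p^{2(m²+n²+m+n)+1} a^{2m+1} b^{2n+1})² + (∑_{m,n∈ℤ} (−1)^{m+n} p^{2(m²+n²)} a^{2m} b^{2n})². (This is the two-variable generalization of Jacobi's identity, written with q = p², x = a², y = b² to clear the fractional exponents q^{(m+1/2)²+(n+1/2)²} x^{m+1/2} y^{n+1/2}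 = p^{2(m²+n²+m+n)+1} a^{2m+1} b^{2n+1}.) -/
open Complex Filter Topology

/-! Auxiliary machinery for the two-variable Jacobi identity. -/

private lemma jac_neg_one_ne : (-1 : ℂ) ≠ 0 := by norm_num

private lemma jac_norm_sign_mul (m : ℤ) (z : ℂ) : ‖(-1 : ℂ) ^ m * z‖ = ‖z‖ := by
  rw [norm_mul, norm_zpow, norm_neg, norm_one, one_zpow, one_mul]

private lemma jac_sign_even (k : ℤ) : (-1 : ℂ) ^ (2 * k) = 1 := by
  rw [zpow_mul]; norm_num

private lemma jac_sign_odd (k : ℤ) : (-1 : ℂ) ^ (2 * k + 1) = -1 := by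
  rw [zpow_add₀ jac_neg_one_ne, jac_sign_even, zpow_one, one_mul]

private lemma jac_master {p a b : ℂ} (hp : p ≠ 0) (ha : a ≠ 0) (hb : b ≠ 0)
    (c i₁ j₁ i₂ j₂ I J K : ℤ) (hI : c + (i₁ + i₂) = I) (hJ : j₁ + j₂ = J) (hK : j₁ - j₂ = K) :
    p ^ c * ((p ^ i₁ * (a * b) ^ j₁) * (p ^ i₂ * (a * b⁻¹) ^ j₂)) = p ^ I * a ^ J * b ^ K := by
  subst hI hJ hK
  rw [mul_zpow, mul_zpow, inv_zpow, ← zpow_neg, zpow_add₀ hp, zpow_add₀ hp, zpow_add₀ ha,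
    zpow_sub₀ hb, div_eq_mul_inv, ← zpow_neg]
  ring

private lemma jac_master0 {p a b : ℂ} (hp : p ≠ 0) (ha : a ≠ 0) (hb : b ≠ 0)
    (i₁ j₁ i₂ j₂ I J K : ℤ) (hI : i₁ + i₂ = I) (hJ : j₁ + j₂ = J) (hK : j₁ - j₂ = K) :
    (p ^ i₁ * (a * b) ^ j₁) * (p ^ i₂ * (a * b⁻¹) ^ j₂) = p ^ I * a ^ J * b ^ K := by
  subst hI hJ hK
  rw [mul_zpow, mul_zpow, inv_zpow, ← zpow_neg, zpow_add₀ hp, zpow_add₀ ha,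
    zpow_sub₀ hb, div_eq_mul_inv, ← zpow_neg]
  ring

private lemma jac_master2 {p a b : ℂ} (hp : p ≠ 0) (i₁ j i₂ k I : ℤ) (hI : i₁ + i₂ = I) :
    (p ^ i₁ * a ^ j) * (p ^ i₂ * b ^ k) = p ^ I * a ^ j * b ^ k := by
  subst hI; rw [zpow_add₀ hp]; ring

private lemma jac_master3 {p a b : ℂ} (hp : p ≠ 0) (m n i₁ j i₂ k I : ℤ) (hI : i₁ + i₂ = I) :
    ((-1 : ℂ) ^ m * (p ^ i₁ * a ^ j)) * ((-1 : ℂ) ^ n * (p ^ i₂ * b ^ k))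
      = (-1 : ℂ) ^ (m + n) * p ^ I * a ^ j * b ^ k := by
  subst hI; rw [zpow_add₀ hp, zpow_add₀ jac_neg_one_ne]; ring

private lemma jac_nat_sum {r t : ℝ} (h0 : 0 < r) (h1 : r < 1) (ht : 0 < t) (A B : ℤ)
    (hA : 0 < A) :
    Summable fun n : ℕ => r ^ (A * (n : ℤ) ^ 2 + B * (n : ℤ)) * t ^ (n : ℤ) := by
  have hr0 : r ≠ 0 := ne_of_gt h0
  have hpos : ∀ n : ℕ, 0 < r ^ (A * (n : ℤ) ^ 2 + B * (n : ℤ)) * t ^ (n : ℤ) := fun n =>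
    mul_pos (zpow_pos h0 _) (zpow_pos ht _)
  apply summable_of_ratio_norm_eventually_le (r := 1/2) (by norm_num)
  have hρ : r ^ ((2 : ℤ) * A) < 1 := by
    have : (2 : ℤ) * A = ((2 * A).toNat : ℤ) := by omega
    rw [this, zpow_natCast]
    exact pow_lt_one₀ h0.le h1 (by omega)
  have hρ0 : 0 ≤ r ^ ((2 : ℤ) * A) := (zpow_pos h0 _).le
  have htend : Tendsto (fun n : ℕ => (r ^ ((2:ℤ) * A)) ^ n * (r ^ (A + B) * t)) atTop (𝓝 0) := by
    simpa using (tendsto_pow_atTop_nhds_zero_of_lt_one hρ0 hρ).mul_const (r ^ (A + B) * t)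
  have hev : ∀ᶠ n : ℕ in atTop, (r ^ ((2:ℤ) * A)) ^ n * (r ^ (A + B) * t) ≤ 1/2 := by
    filter_upwards [htend.eventually (eventually_le_nhds (by norm_num : (0:ℝ) < 1/2))] with n hn
    exact hn
  filter_upwards [hev] with n hn
  have key : r ^ (A * ((n:ℤ)+1) ^ 2 + B * ((n:ℤ)+1)) * t ^ (((n:ℤ))+1)
      = ((r ^ ((2:ℤ) * A)) ^ n * (r ^ (A + B) * t)) *
        (r ^ (A * (n : ℤ) ^ 2 + B * (n : ℤ)) * t ^ (n : ℤ)) := by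
    rw [← zpow_natCast (r ^ ((2:ℤ) * A)) n, ← zpow_mul]
    rw [show A * ((n:ℤ)+1) ^ 2 + B * ((n:ℤ)+1) =
      ((2:ℤ) * A * n) + ((A + B) + (A * (n : ℤ) ^ 2 + B * (n : ℤ))) by ring]
    rw [show ((n:ℤ)+1) = (1:ℤ) + n by ring]
    rw [zpow_add₀ hr0, zpow_add₀ hr0, zpow_add₀ (ne_of_gt ht), zpow_one]
    ring
  rw [Real.norm_of_nonneg (hpos _).le, Real.norm_of_nonneg (hpos n).le]
  push_cast
  rw [key]
  nlinarith [hpos n, hn, (hpos n).le]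

set_option maxHeartbeats 1000000 in
private lemma jac_int_sum {r t : ℝ} (h0 : 0 < r) (h1 : r < 1) (ht : 0 < t) (A B : ℤ)
    (hA : 0 < A) :
    Summable fun n : ℤ => r ^ (A * n ^ 2 + B * n) * t ^ n := by
  apply Summable.of_nat_of_neg (jac_nat_sum h0 h1 ht A B hA)
  apply (jac_nat_sum h0 h1 (inv_pos.mpr ht) A (-B) hA).congr
  intro n
  rw [show A * (-(n:ℤ)) ^ 2 + B * (-(n:ℤ)) = A * (n:ℤ)^2 + (-B) * (n:ℤ) by ring,
    zpow_neg, ← inv_zpow]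

private lemma jac_norm_summable {p x : ℂ} (h1 : ‖p‖ < 1) (hp0 : p ≠ 0) (hx : x ≠ 0)
    (A B E C D : ℤ) (hA : 0 < A) :
    Summable fun n : ℤ => ‖p ^ (A * n ^ 2 + B * n + E) * x ^ (C * n + D)‖ := by
  have h0 : 0 < ‖p‖ := norm_pos_iff.mpr hp0
  have hxn : (0:ℝ) < ‖x‖ := norm_pos_iff.mpr hx
  have ht : (0:ℝ) < ‖x‖ ^ C := zpow_pos hxn _
  apply ((jac_int_sum h0 h1 ht A B hA).mul_left (‖p‖ ^ E * ‖x‖ ^ D)).congr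
  intro n
  rw [norm_mul, norm_zpow, norm_zpow, zpow_add₀ (ne_of_gt h0) (A * n ^ 2 + B * n) E,
    zpow_add₀ (ne_of_gt hxn) (C * n) D, zpow_mul ‖x‖ C n]
  ring

noncomputable section

private def jacSEven : Set (ℤ × ℤ) := {x | Even (x.1 + x.2)}

private def jacEEven : ℤ × ℤ ≃ ↥jacSEven :=
  Equiv.ofBijective
    (fun rs => ⟨(rs.1 + rs.2, rs.1 - rs.2),
      show Even ((rs.1 + rs.2) + (rs.1 - rs.2)) from ⟨rs.1, by ring⟩⟩) <| by
  constructor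
  · rintro ⟨r, t⟩ ⟨r', t'⟩ h
    simp only [Subtype.mk.injEq, Prod.mk.injEq, Prod.ext_iff, Subtype.ext_iff] at h ⊢
    omega
  · rintro ⟨⟨m, n⟩, hmn⟩
    obtain ⟨k, hk⟩ := hmn
    exact ⟨(k, m - k), by simp only [Subtype.mk.injEq, Prod.mk.injEq, Subtype.ext_iff] at hk ⊢; omega⟩

private def jacEOdd1 : ℤ × ℤ ≃ ↥jacSEvenᶜ :=
  Equiv.ofBijective
    (fun rs => ⟨(rs.1 + rs.2 + 1, rs.1 - rs.2),
      show ¬ Even ((rs.1 + rs.2 + 1) + (rs.1 - rs.2)) from by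
        rw [Int.not_even_iff_odd]; exact ⟨rs.1, by ring⟩⟩) <| by
  constructor
  · rintro ⟨r, t⟩ ⟨r', t'⟩ h
    simp only [Subtype.mk.injEq, Prod.mk.injEq, Prod.ext_iff, Subtype.ext_iff] at h ⊢
    omega
  · rintro ⟨⟨m, n⟩, hmn⟩
    rw [Set.mem_compl_iff, jacSEven, Set.mem_setOf_eq, Int.not_even_iff_odd] at hmn
    obtain ⟨k, hk⟩ := hmn
    exact ⟨(k, m - k - 1), by simp only [Subtype.mk.injEq, Prod.mk.injEq, Subtype.ext_iff] at hk ⊢; omega⟩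

private def jacEOdd2 : ℤ × ℤ ≃ ↥jacSEvenᶜ :=
  Equiv.ofBijective
    (fun rs => ⟨(rs.1 + rs.2, rs.1 - rs.2 - 1),
      show ¬ Even ((rs.1 + rs.2) + (rs.1 - rs.2 - 1)) from by
        rw [Int.not_even_iff_odd]; exact ⟨rs.1 - 1, by ring⟩⟩) <| by
  constructor
  · rintro ⟨r, t⟩ ⟨r', t'⟩ h
    simp only [Subtype.mk.injEq, Prod.mk.injEq, Prod.ext_iff, Subtype.ext_iff] at h ⊢
    omega
  · rintro ⟨⟨m, n⟩, hmn⟩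
    rw [Set.mem_compl_iff, jacSEven, Set.mem_setOf_eq, Int.not_even_iff_odd] at hmn
    obtain ⟨k, hk⟩ := hmn
    exact ⟨(k + 1, m - k - 1), by simp only [Subtype.mk.injEq, Prod.mk.injEq, Subtype.ext_iff] at hk ⊢; omega⟩

private lemma jac_split1 {F : ℤ × ℤ → ℂ} (hF : Summable F) :
    ∑' x : ℤ × ℤ, F x = (∑' rs : ℤ × ℤ, F (rs.1 + rs.2, rs.1 - rs.2))
      + ∑' rs : ℤ × ℤ, F (rs.1 + rs.2 + 1, rs.1 - rs.2) := by
  rw [← hF.tsum_subtype_add_tsum_subtype_compl jacSEven]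
  congr 1
  · rw [← jacEEven.tsum_eq fun x : jacSEven => F x]
    exact tsum_congr fun rs => rfl
  · rw [← jacEOdd1.tsum_eq fun x : ↥jacSEvenᶜ => F x]
    exact tsum_congr fun rs => rfl

private lemma jac_split2 {F : ℤ × ℤ → ℂ} (hF : Summable F) :
    ∑' x : ℤ × ℤ, F x = (∑' rs : ℤ × ℤ, F (rs.1 + rs.2, rs.1 - rs.2))
      + ∑' rs : ℤ × ℤ, F (rs.1 + rs.2, rs.1 - rs.2 - 1) := by
  rw [← hF.tsum_subtype_add_tsum_subtype_compl jacSEven]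
  congr 1
  · rw [← jacEEven.tsum_eq fun x : jacSEven => F x]
    exact tsum_congr fun rs => rfl
  · rw [← jacEOdd2.tsum_eq fun x : ↥jacSEvenᶜ => F x]
    exact tsum_congr fun rs => rfl

end

set_option maxHeartbeats 4000000 in
/-- Two-variable generalization of Jacobi's identity
(written with `q = p²`, `x = a²`, `y = b²` to clear fractional exponents). -/
theorem jacobi_two_variable (p a b : ℂ) (hp : ‖p‖ < 1)
    (ha : a ≠ 0) (hb : b ≠ 0) :
    (∑' m : ℤ, ∑' n : ℤ, (-1 : ℂ) ^ (m + n) *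
        p ^ (2 * (m ^ 2 + n ^ 2 + m + n) + 1) * a ^ (2 * m + 1) * b ^ (2 * n + 1)) ^ 2
      + (∑' m : ℤ, ∑' n : ℤ, p ^ (2 * (m ^ 2 + n ^ 2)) * a ^ (2 * m) * b ^ (2 * n)) ^ 2
      = (∑' m : ℤ, ∑' n : ℤ,
          p ^ (2 * (m ^ 2 + n ^ 2 + m + n) + 1) * a ^ (2 * m + 1) * b ^ (2 * n + 1)) ^ 2
        + (∑' m : ℤ, ∑' n : ℤ, (-1 : ℂ) ^ (m + n) *
            p ^ (2 * (m ^ 2 + n ^ 2)) * a ^ (2 * m) * b ^ (2 * n)) ^ 2 := by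
  by_cases hp0 : p = 0
  · subst hp0
    have hS1 : (∑' m : ℤ, ∑' n : ℤ, (-1 : ℂ) ^ (m + n) *
        (0:ℂ) ^ (2 * (m ^ 2 + n ^ 2 + m + n) + 1) * a ^ (2 * m + 1) * b ^ (2 * n + 1)) = 0 := by
      have h : ∀ m n : ℤ, (-1 : ℂ) ^ (m + n) *
          (0:ℂ) ^ (2 * (m ^ 2 + n ^ 2 + m + n) + 1) * a ^ (2 * m + 1) * b ^ (2 * n + 1) = 0 := by
        intro m n
        rw [zero_zpow _ (by omega)]
        ring
      calc (∑' m : ℤ, ∑' n : ℤ, (-1 : ℂ) ^ (m + n) *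
          (0:ℂ) ^ (2 * (m ^ 2 + n ^ 2 + m + n) + 1) * a ^ (2 * m + 1) * b ^ (2 * n + 1))
          = ∑' _ : ℤ, ∑' _ : ℤ, (0:ℂ) := tsum_congr fun m => tsum_congr fun n => h m n
        _ = 0 := by simp
    have hS3 : (∑' m : ℤ, ∑' n : ℤ,
        (0:ℂ) ^ (2 * (m ^ 2 + n ^ 2 + m + n) + 1) * a ^ (2 * m + 1) * b ^ (2 * n + 1)) = 0 := by
      have h : ∀ m n : ℤ,
          (0:ℂ) ^ (2 * (m ^ 2 + n ^ 2 + m + n) + 1) * a ^ (2 * m + 1) * b ^ (2 * n + 1) = 0 := by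
        intro m n
        rw [zero_zpow _ (by omega)]
        ring
      calc (∑' m : ℤ, ∑' n : ℤ,
          (0:ℂ) ^ (2 * (m ^ 2 + n ^ 2 + m + n) + 1) * a ^ (2 * m + 1) * b ^ (2 * n + 1))
          = ∑' _ : ℤ, ∑' _ : ℤ, (0:ℂ) := tsum_congr fun m => tsum_congr fun n => h m n
        _ = 0 := by simp
    have hzero : ∀ m n : ℤ, ¬(m = 0 ∧ n = 0) → (2 * (m ^ 2 + n ^ 2) : ℤ) ≠ 0 := by
      intro m n hmn
      rcases not_and_or.mp hmn with hm | hm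
      · have h2 : (0:ℤ) < m ^ 2 := by
          rcases lt_or_gt_of_ne hm with h | h <;> nlinarith
        nlinarith [sq_nonneg n]
      · have h2 : (0:ℤ) < n ^ 2 := by
          rcases lt_or_gt_of_ne hm with h | h <;> nlinarith
        nlinarith [sq_nonneg m]
    have hS2 : (∑' m : ℤ, ∑' n : ℤ,
        (0:ℂ) ^ (2 * (m ^ 2 + n ^ 2)) * a ^ (2 * m) * b ^ (2 * n)) = 1 := by
      have inner : ∀ m : ℤ, (∑' n : ℤ, (0:ℂ) ^ (2 * (m ^ 2 + n ^ 2)) * a ^ (2 * m) * b ^ (2 * n))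
          = if m = 0 then 1 else 0 := by
        intro m
        by_cases hm : m = 0
        · subst hm
          rw [if_pos rfl, tsum_eq_single (0 : ℤ) ?_]
          · norm_num
          · intro n hn
            rw [zero_zpow _ (hzero 0 n (by tauto)), zero_mul, zero_mul]
        · rw [if_neg hm]
          have h : ∀ n : ℤ, (0:ℂ) ^ (2 * (m ^ 2 + n ^ 2)) * a ^ (2 * m) * b ^ (2 * n) = 0 := by
            intro n
            rw [zero_zpow _ (hzero m n (by tauto)), zero_mul, zero_mul]
          exact (tsum_congr h).trans tsum_zero
      calc (∑' m : ℤ, ∑' n : ℤ, (0:ℂ) ^ (2 * (m ^ 2 + n ^ 2)) * a ^ (2 * m) * b ^ (2 * n))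
          = ∑' m : ℤ, if m = 0 then (1:ℂ) else 0 := tsum_congr inner
        _ = 1 := by
            rw [tsum_eq_single (0 : ℤ) (fun m hm => if_neg hm), if_pos rfl]
    have hS4 : (∑' m : ℤ, ∑' n : ℤ, (-1 : ℂ) ^ (m + n) *
        (0:ℂ) ^ (2 * (m ^ 2 + n ^ 2)) * a ^ (2 * m) * b ^ (2 * n)) = 1 := by
      have inner : ∀ m : ℤ, (∑' n : ℤ, (-1 : ℂ) ^ (m + n) *
          (0:ℂ) ^ (2 * (m ^ 2 + n ^ 2)) * a ^ (2 * m) * b ^ (2 * n))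
          = if m = 0 then 1 else 0 := by
        intro m
        by_cases hm : m = 0
        · subst hm
          rw [if_pos rfl, tsum_eq_single (0 : ℤ) ?_]
          · norm_num
          · intro n hn
            rw [zero_zpow _ (hzero 0 n (by tauto))]
            ring
        · rw [if_neg hm]
          have h : ∀ n : ℤ, (-1 : ℂ) ^ (m + n) *
              (0:ℂ) ^ (2 * (m ^ 2 + n ^ 2)) * a ^ (2 * m) * b ^ (2 * n) = 0 := by
            intro n
            rw [zero_zpow _ (hzero m n (by tauto))]
            ring
          exact (tsum_congr h).trans tsum_zero
      calc (∑' m : ℤ, ∑' n : ℤ, (-1 : ℂ) ^ (m + n) *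
          (0:ℂ) ^ (2 * (m ^ 2 + n ^ 2)) * a ^ (2 * m) * b ^ (2 * n))
          = ∑' m : ℤ, if m = 0 then (1:ℂ) else 0 := tsum_congr inner
        _ = 1 := by
            rw [tsum_eq_single (0 : ℤ) (fun m hm => if_neg hm), if_pos rfl]
    rw [hS1, hS2, hS3, hS4]
  · have hp1 : ‖p‖ < 1 := hp
    have hab : a * b ≠ 0 := mul_ne_zero ha hb
    have hab' : a * b⁻¹ ≠ 0 := mul_ne_zero ha (inv_ne_zero hb)
    -- one-variable norm-summability facts
    have hu2 : Summable fun m : ℤ => ‖p ^ (2*m^2) * a ^ (2*m)‖ :=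
      (jac_norm_summable hp1 hp0 ha 2 0 0 2 0 (by norm_num)).congr fun m => by
        rw [show (2:ℤ)*m^2 + 0*m + 0 = 2*m^2 by ring, show (2:ℤ)*m + 0 = 2*m by ring]
    have hv2 : Summable fun n : ℤ => ‖p ^ (2*n^2) * b ^ (2*n)‖ :=
      (jac_norm_summable hp1 hp0 hb 2 0 0 2 0 (by norm_num)).congr fun n => by
        rw [show (2:ℤ)*n^2 + 0*n + 0 = 2*n^2 by ring, show (2:ℤ)*n + 0 = 2*n by ring]
    have hu3 : Summable fun m : ℤ => ‖p ^ (2*m^2+2*m+1) * a ^ (2*m+1)‖ :=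
      jac_norm_summable hp1 hp0 ha 2 2 1 2 1 (by norm_num)
    have hv3 : Summable fun n : ℤ => ‖p ^ (2*n^2+2*n) * b ^ (2*n+1)‖ :=
      (jac_norm_summable hp1 hp0 hb 2 2 0 2 1 (by norm_num)).congr fun n => by
        rw [show (2:ℤ)*n^2 + 2*n + 0 = 2*n^2+2*n by ring]
    have hu1 : Summable fun m : ℤ => ‖(-1:ℂ) ^ m * (p ^ (2*m^2+2*m+1) * a ^ (2*m+1))‖ :=
      hu3.congr fun m => (jac_norm_sign_mul m _).symm
    have hv1 : Summable fun n : ℤ => ‖(-1:ℂ) ^ n * (p ^ (2*n^2+2*n) * b ^ (2*n+1))‖ :=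
      hv3.congr fun n => (jac_norm_sign_mul n _).symm
    have hu4 : Summable fun m : ℤ => ‖(-1:ℂ) ^ m * (p ^ (2*m^2) * a ^ (2*m))‖ :=
      hu2.congr fun m => (jac_norm_sign_mul m _).symm
    have hv4 : Summable fun n : ℤ => ‖(-1:ℂ) ^ n * (p ^ (2*n^2) * b ^ (2*n))‖ :=
      hv2.congr fun n => (jac_norm_sign_mul n _).symm
    have hFab : Summable fun r : ℤ => ‖p ^ (4*r^2) * (a*b) ^ (2*r)‖ :=
      (jac_norm_summable hp1 hp0 hab 4 0 0 2 0 (by norm_num)).congr fun r => by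
        rw [show (4:ℤ)*r^2 + 0*r + 0 = 4*r^2 by ring, show (2:ℤ)*r + 0 = 2*r by ring]
    have hFab' : Summable fun r : ℤ => ‖p ^ (4*r^2) * (a*b⁻¹) ^ (2*r)‖ :=
      (jac_norm_summable hp1 hp0 hab' 4 0 0 2 0 (by norm_num)).congr fun r => by
        rw [show (4:ℤ)*r^2 + 0*r + 0 = 4*r^2 by ring, show (2:ℤ)*r + 0 = 2*r by ring]
    have hGab : Summable fun r : ℤ => ‖p ^ (4*r^2+4*r) * (a*b) ^ (2*r+1)‖ :=
      (jac_norm_summable hp1 hp0 hab 4 4 0 2 1 (by norm_num)).congr fun r => by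
        rw [show (4:ℤ)*r^2 + 4*r + 0 = 4*r^2+4*r by ring]
    have hGab' : Summable fun r : ℤ => ‖p ^ (4*r^2+4*r) * (a*b⁻¹) ^ (2*r+1)‖ :=
      (jac_norm_summable hp1 hp0 hab' 4 4 0 2 1 (by norm_num)).congr fun r => by
        rw [show (4:ℤ)*r^2 + 4*r + 0 = 4*r^2+4*r by ring]
    -- summability of the double series
    have hF1 : Summable (fun x : ℤ × ℤ => (-1 : ℂ) ^ (x.1 + x.2) *
        p ^ (2 * (x.1 ^ 2 + x.2 ^ 2 + x.1 + x.2) + 1) * a ^ (2 * x.1 + 1) * b ^ (2 * x.2 + 1)) :=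
      (summable_mul_of_summable_norm hu1 hv1).congr fun x =>
        jac_master3 hp0 _ _ _ _ _ _ _ (by ring)
    have hF2 : Summable (fun x : ℤ × ℤ =>
        p ^ (2 * (x.1 ^ 2 + x.2 ^ 2)) * a ^ (2 * x.1) * b ^ (2 * x.2)) :=
      (summable_mul_of_summable_norm hu2 hv2).congr fun x =>
        jac_master2 hp0 _ _ _ _ _ (by ring)
    have hF3 : Summable (fun x : ℤ × ℤ =>
        p ^ (2 * (x.1 ^ 2 + x.2 ^ 2 + x.1 + x.2) + 1) * a ^ (2 * x.1 + 1) * b ^ (2 * x.2 + 1)) :=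
      (summable_mul_of_summable_norm hu3 hv3).congr fun x =>
        jac_master2 hp0 _ _ _ _ _ (by ring)
    have hF4 : Summable (fun x : ℤ × ℤ => (-1 : ℂ) ^ (x.1 + x.2) *
        p ^ (2 * (x.1 ^ 2 + x.2 ^ 2)) * a ^ (2 * x.1) * b ^ (2 * x.2)) :=
      (summable_mul_of_summable_norm hu4 hv4).congr fun x =>
        jac_master3 hp0 _ _ _ _ _ _ _ (by ring)
    -- evaluation of the four double series
    have hS2 : (∑' m : ℤ, ∑' n : ℤ, p ^ (2 * (m ^ 2 + n ^ 2)) * a ^ (2 * m) * b ^ (2 * n))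
        = (∑' r : ℤ, p ^ (4*r^2) * (a*b) ^ (2*r)) * (∑' s : ℤ, p ^ (4*s^2) * (a*b⁻¹) ^ (2*s))
          + p ^ (2:ℤ) * ((∑' r : ℤ, p ^ (4*r^2+4*r) * (a*b) ^ (2*r+1)) *
            (∑' s : ℤ, p ^ (4*s^2+4*s) * (a*b⁻¹) ^ (2*s+1))) := by
      calc (∑' m : ℤ, ∑' n : ℤ, p ^ (2 * (m ^ 2 + n ^ 2)) * a ^ (2 * m) * b ^ (2 * n))
          = ∑' x : ℤ × ℤ, p ^ (2 * (x.1 ^ 2 + x.2 ^ 2)) * a ^ (2 * x.1) * b ^ (2 * x.2) :=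
            (Summable.tsum_prod hF2).symm
        _ = (∑' rs : ℤ × ℤ, p ^ (2 * ((rs.1+rs.2) ^ 2 + (rs.1-rs.2) ^ 2)) *
              a ^ (2 * (rs.1+rs.2)) * b ^ (2 * (rs.1-rs.2)))
            + ∑' rs : ℤ × ℤ, p ^ (2 * ((rs.1+rs.2+1) ^ 2 + (rs.1-rs.2) ^ 2)) *
              a ^ (2 * (rs.1+rs.2+1)) * b ^ (2 * (rs.1-rs.2)) := jac_split1 hF2
        _ = (∑' rs : ℤ × ℤ, (p ^ (4*rs.1^2) * (a*b) ^ (2*rs.1)) *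
              (p ^ (4*rs.2^2) * (a*b⁻¹) ^ (2*rs.2)))
            + ∑' rs : ℤ × ℤ, p ^ (2:ℤ) * ((p ^ (4*rs.1^2+4*rs.1) * (a*b) ^ (2*rs.1+1)) *
              (p ^ (4*rs.2^2+4*rs.2) * (a*b⁻¹) ^ (2*rs.2+1))) := by
            congr 1
            · exact tsum_congr fun rs =>
                (jac_master0 hp0 ha hb _ _ _ _ _ _ _ (by ring) (by ring) (by ring)).symm
            · exact tsum_congr fun rs =>
                (jac_master hp0 ha hb 2 _ _ _ _ _ _ _ (by ring) (by ring) (by ring)).symm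
        _ = (∑' r : ℤ, p ^ (4*r^2) * (a*b) ^ (2*r)) * (∑' s : ℤ, p ^ (4*s^2) * (a*b⁻¹) ^ (2*s))
            + p ^ (2:ℤ) * ((∑' r : ℤ, p ^ (4*r^2+4*r) * (a*b) ^ (2*r+1)) *
              (∑' s : ℤ, p ^ (4*s^2+4*s) * (a*b⁻¹) ^ (2*s+1))) := by
            rw [tsum_mul_left, tsum_mul_tsum_of_summable_norm hFab hFab',
              tsum_mul_tsum_of_summable_norm hGab hGab']
    have hS4 : (∑' m : ℤ, ∑' n : ℤ, (-1 : ℂ) ^ (m + n) *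
          p ^ (2 * (m ^ 2 + n ^ 2)) * a ^ (2 * m) * b ^ (2 * n))
        = (∑' r : ℤ, p ^ (4*r^2) * (a*b) ^ (2*r)) * (∑' s : ℤ, p ^ (4*s^2) * (a*b⁻¹) ^ (2*s))
          + -(p ^ (2:ℤ) * ((∑' r : ℤ, p ^ (4*r^2+4*r) * (a*b) ^ (2*r+1)) *
            (∑' s : ℤ, p ^ (4*s^2+4*s) * (a*b⁻¹) ^ (2*s+1)))) := by
      calc (∑' m : ℤ, ∑' n : ℤ, (-1 : ℂ) ^ (m + n) *
            p ^ (2 * (m ^ 2 + n ^ 2)) * a ^ (2 * m) * b ^ (2 * n))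
          = ∑' x : ℤ × ℤ, (-1 : ℂ) ^ (x.1 + x.2) *
              p ^ (2 * (x.1 ^ 2 + x.2 ^ 2)) * a ^ (2 * x.1) * b ^ (2 * x.2) :=
            (Summable.tsum_prod hF4).symm
        _ = (∑' rs : ℤ × ℤ, (-1 : ℂ) ^ ((rs.1+rs.2) + (rs.1-rs.2)) *
              p ^ (2 * ((rs.1+rs.2) ^ 2 + (rs.1-rs.2) ^ 2)) *
              a ^ (2 * (rs.1+rs.2)) * b ^ (2 * (rs.1-rs.2)))
            + ∑' rs : ℤ × ℤ, (-1 : ℂ) ^ ((rs.1+rs.2+1) + (rs.1-rs.2)) *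
              p ^ (2 * ((rs.1+rs.2+1) ^ 2 + (rs.1-rs.2) ^ 2)) *
              a ^ (2 * (rs.1+rs.2+1)) * b ^ (2 * (rs.1-rs.2)) := jac_split1 hF4
        _ = (∑' rs : ℤ × ℤ, (p ^ (4*rs.1^2) * (a*b) ^ (2*rs.1)) *
              (p ^ (4*rs.2^2) * (a*b⁻¹) ^ (2*rs.2)))
            + ∑' rs : ℤ × ℤ, -(p ^ (2:ℤ) * ((p ^ (4*rs.1^2+4*rs.1) * (a*b) ^ (2*rs.1+1)) *
              (p ^ (4*rs.2^2+4*rs.2) * (a*b⁻¹) ^ (2*rs.2+1)))) := by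
            congr 1
            · refine tsum_congr fun rs => ?_
              rw [show (rs.1+rs.2) + (rs.1-rs.2) = 2*rs.1 by ring, jac_sign_even, one_mul]
              exact (jac_master0 hp0 ha hb _ _ _ _ _ _ _ (by ring) (by ring) (by ring)).symm
            · refine tsum_congr fun rs => ?_
              rw [show (rs.1+rs.2+1) + (rs.1-rs.2) = 2*rs.1+1 by ring, jac_sign_odd,
                neg_one_mul, neg_mul, neg_mul, neg_inj]
              exact (jac_master hp0 ha hb 2 _ _ _ _ _ _ _ (by ring) (by ring) (by ring)).symm
        _ = (∑' r : ℤ, p ^ (4*r^2) * (a*b) ^ (2*r)) * (∑' s : ℤ, p ^ (4*s^2) * (a*b⁻¹) ^ (2*s))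
            + -(p ^ (2:ℤ) * ((∑' r : ℤ, p ^ (4*r^2+4*r) * (a*b) ^ (2*r+1)) *
              (∑' s : ℤ, p ^ (4*s^2+4*s) * (a*b⁻¹) ^ (2*s+1)))) := by
            rw [tsum_neg, tsum_mul_left, tsum_mul_tsum_of_summable_norm hFab hFab',
              tsum_mul_tsum_of_summable_norm hGab hGab']
    have hS3 : (∑' m : ℤ, ∑' n : ℤ,
          p ^ (2 * (m ^ 2 + n ^ 2 + m + n) + 1) * a ^ (2 * m + 1) * b ^ (2 * n + 1))
        = p ^ (1:ℤ) * ((∑' r : ℤ, p ^ (4*r^2+4*r) * (a*b) ^ (2*r+1)) *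
            (∑' s : ℤ, p ^ (4*s^2) * (a*b⁻¹) ^ (2*s)))
          + p ^ (1:ℤ) * ((∑' r : ℤ, p ^ (4*r^2) * (a*b) ^ (2*r)) *
            (∑' s : ℤ, p ^ (4*s^2+4*s) * (a*b⁻¹) ^ (2*s+1))) := by
      calc (∑' m : ℤ, ∑' n : ℤ,
            p ^ (2 * (m ^ 2 + n ^ 2 + m + n) + 1) * a ^ (2 * m + 1) * b ^ (2 * n + 1))
          = ∑' x : ℤ × ℤ,
              p ^ (2 * (x.1 ^ 2 + x.2 ^ 2 + x.1 + x.2) + 1) * a ^ (2 * x.1 + 1) * b ^ (2 * x.2 + 1) :=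
            (Summable.tsum_prod hF3).symm
        _ = (∑' rs : ℤ × ℤ, p ^ (2 * ((rs.1+rs.2) ^ 2 + (rs.1-rs.2) ^ 2 + (rs.1+rs.2) + (rs.1-rs.2)) + 1) *
              a ^ (2 * (rs.1+rs.2) + 1) * b ^ (2 * (rs.1-rs.2) + 1))
            + ∑' rs : ℤ × ℤ, p ^ (2 * ((rs.1+rs.2) ^ 2 + (rs.1-rs.2-1) ^ 2 + (rs.1+rs.2) + (rs.1-rs.2-1)) + 1) *
              a ^ (2 * (rs.1+rs.2) + 1) * b ^ (2 * (rs.1-rs.2-1) + 1) := jac_split2 hF3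
        _ = (∑' rs : ℤ × ℤ, p ^ (1:ℤ) * ((p ^ (4*rs.1^2+4*rs.1) * (a*b) ^ (2*rs.1+1)) *
              (p ^ (4*rs.2^2) * (a*b⁻¹) ^ (2*rs.2))))
            + ∑' rs : ℤ × ℤ, p ^ (1:ℤ) * ((p ^ (4*rs.1^2) * (a*b) ^ (2*rs.1)) *
              (p ^ (4*rs.2^2+4*rs.2) * (a*b⁻¹) ^ (2*rs.2+1))) := by
            congr 1
            · exact tsum_congr fun rs =>
                (jac_master hp0 ha hb 1 _ _ _ _ _ _ _ (by ring) (by ring) (by ring)).symm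
            · exact tsum_congr fun rs =>
                (jac_master hp0 ha hb 1 _ _ _ _ _ _ _ (by ring) (by ring) (by ring)).symm
        _ = p ^ (1:ℤ) * ((∑' r : ℤ, p ^ (4*r^2+4*r) * (a*b) ^ (2*r+1)) *
              (∑' s : ℤ, p ^ (4*s^2) * (a*b⁻¹) ^ (2*s)))
            + p ^ (1:ℤ) * ((∑' r : ℤ, p ^ (4*r^2) * (a*b) ^ (2*r)) *
              (∑' s : ℤ, p ^ (4*s^2+4*s) * (a*b⁻¹) ^ (2*s+1))) := by
            rw [tsum_mul_left, tsum_mul_left, tsum_mul_tsum_of_summable_norm hGab hFab',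
              tsum_mul_tsum_of_summable_norm hFab hGab']
    have hS1 : (∑' m : ℤ, ∑' n : ℤ, (-1 : ℂ) ^ (m + n) *
          p ^ (2 * (m ^ 2 + n ^ 2 + m + n) + 1) * a ^ (2 * m + 1) * b ^ (2 * n + 1))
        = p ^ (1:ℤ) * ((∑' r : ℤ, p ^ (4*r^2+4*r) * (a*b) ^ (2*r+1)) *
            (∑' s : ℤ, p ^ (4*s^2) * (a*b⁻¹) ^ (2*s)))
          + -(p ^ (1:ℤ) * ((∑' r : ℤ, p ^ (4*r^2) * (a*b) ^ (2*r)) *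
            (∑' s : ℤ, p ^ (4*s^2+4*s) * (a*b⁻¹) ^ (2*s+1)))) := by
      calc (∑' m : ℤ, ∑' n : ℤ, (-1 : ℂ) ^ (m + n) *
            p ^ (2 * (m ^ 2 + n ^ 2 + m + n) + 1) * a ^ (2 * m + 1) * b ^ (2 * n + 1))
          = ∑' x : ℤ × ℤ, (-1 : ℂ) ^ (x.1 + x.2) *
              p ^ (2 * (x.1 ^ 2 + x.2 ^ 2 + x.1 + x.2) + 1) * a ^ (2 * x.1 + 1) * b ^ (2 * x.2 + 1) :=
            (Summable.tsum_prod hF1).symm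
        _ = (∑' rs : ℤ × ℤ, (-1 : ℂ) ^ ((rs.1+rs.2) + (rs.1-rs.2)) *
              p ^ (2 * ((rs.1+rs.2) ^ 2 + (rs.1-rs.2) ^ 2 + (rs.1+rs.2) + (rs.1-rs.2)) + 1) *
              a ^ (2 * (rs.1+rs.2) + 1) * b ^ (2 * (rs.1-rs.2) + 1))
            + ∑' rs : ℤ × ℤ, (-1 : ℂ) ^ ((rs.1+rs.2) + (rs.1-rs.2-1)) *
              p ^ (2 * ((rs.1+rs.2) ^ 2 + (rs.1-rs.2-1) ^ 2 + (rs.1+rs.2) + (rs.1-rs.2-1)) + 1) *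
              a ^ (2 * (rs.1+rs.2) + 1) * b ^ (2 * (rs.1-rs.2-1) + 1) := jac_split2 hF1
        _ = (∑' rs : ℤ × ℤ, p ^ (1:ℤ) * ((p ^ (4*rs.1^2+4*rs.1) * (a*b) ^ (2*rs.1+1)) *
              (p ^ (4*rs.2^2) * (a*b⁻¹) ^ (2*rs.2))))
            + ∑' rs : ℤ × ℤ, -(p ^ (1:ℤ) * ((p ^ (4*rs.1^2) * (a*b) ^ (2*rs.1)) *
              (p ^ (4*rs.2^2+4*rs.2) * (a*b⁻¹) ^ (2*rs.2+1)))) := by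
            congr 1
            · refine tsum_congr fun rs => ?_
              rw [show (rs.1+rs.2) + (rs.1-rs.2) = 2*rs.1 by ring, jac_sign_even, one_mul]
              exact (jac_master hp0 ha hb 1 _ _ _ _ _ _ _ (by ring) (by ring) (by ring)).symm
            · refine tsum_congr fun rs => ?_
              rw [show (rs.1+rs.2) + (rs.1-rs.2-1) = 2*(rs.1-1)+1 by ring, jac_sign_odd,
                neg_one_mul, neg_mul, neg_mul, neg_inj]
              exact (jac_master hp0 ha hb 1 _ _ _ _ _ _ _ (by ring) (by ring) (by ring)).symm
        _ = p ^ (1:ℤ) * ((∑' r : ℤ, p ^ (4*r^2+4*r) * (a*b) ^ (2*r+1)) *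
              (∑' s : ℤ, p ^ (4*s^2) * (a*b⁻¹) ^ (2*s)))
            + -(p ^ (1:ℤ) * ((∑' r : ℤ, p ^ (4*r^2) * (a*b) ^ (2*r)) *
              (∑' s : ℤ, p ^ (4*s^2+4*s) * (a*b⁻¹) ^ (2*s+1)))) := by
            rw [tsum_neg, tsum_mul_left, tsum_mul_left,
              tsum_mul_tsum_of_summable_norm hGab hFab',
              tsum_mul_tsum_of_summable_norm hFab hGab']
    rw [hS1, hS2, hS3, hS4]
    have hP : p ^ (2:ℤ) = p ^ (1:ℤ) * p ^ (1:ℤ) := by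
      rw [← zpow_add₀ hp0]; norm_num
    rw [hP]
    ring
end

section
/- Let τ ∈ ℂ with Im τ > 0. The three entire functions of z ∈ ℂ given by f₁(z) = θ₁(3z|3τ), f₂(z) = exp(2iz)·θ₁(3z+πτ|3τ), and f₃(z) = exp(−2iz)·θ₁(3z−πτ|3τ) are linearly independent over ℂ: if c₁, c₂, c₃ ∈ ℂ satisfy c₁f₁(z) + c₂f₂(z) + c₃f₃(z) = 0 for all z ∈ ℂ, then c₁ = c₂ = c₃ = 0. -/
open Complex

/-- The Jacobi theta function θ₁(z|τ). -/
noncomputable def theta1 (z τ : ℂ) : ℂ :=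
  -Complex.I * ∑' n : ℤ, (-1 : ℂ) ^ n *
    Complex.exp (Real.pi * Complex.I * τ * (2 * (n : ℂ) + 1) ^ 2 / 4) *
    Complex.exp ((2 * (n : ℂ) + 1) * Complex.I * z)

lemma theta1_eq (z τ : ℂ) :
    theta1 z τ = -Complex.I * Complex.exp (Real.pi * Complex.I * τ / 4 + Complex.I * z) *
      jacobiTheta₂ (z / Real.pi + τ / 2 + 1 / 2) τ := by
  have hπ : (Real.pi : ℂ) ≠ 0 := Complex.ofReal_ne_zero.mpr Real.pi_ne_zero
  have key : Complex.exp (Real.pi * Complex.I * τ / 4 + Complex.I * z) *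
      jacobiTheta₂ (z / Real.pi + τ / 2 + 1 / 2) τ
      = ∑' n : ℤ, (-1 : ℂ) ^ n *
        Complex.exp (Real.pi * Complex.I * τ * (2 * (n : ℂ) + 1) ^ 2 / 4) *
        Complex.exp ((2 * (n : ℂ) + 1) * Complex.I * z) := by
    rw [jacobiTheta₂, ← tsum_mul_left]
    refine tsum_congr fun n => ?_
    have hn : ((-1 : ℂ)) ^ n = Complex.exp ((n : ℂ) * (Real.pi * Complex.I)) := by
      rw [Complex.exp_int_mul, Complex.exp_pi_mul_I]
    rw [hn, jacobiTheta₂_term, ← Complex.exp_add, ← Complex.exp_add, ← Complex.exp_add]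
    refine congrArg Complex.exp ?_
    field_simp
    ring
  rw [theta1, ← key]
  exact (mul_assoc _ _ _).symm

lemma theta1_add_pi (z τ : ℂ) : theta1 (z + Real.pi) τ = -theta1 z τ := by
  have hπ : (Real.pi : ℂ) ≠ 0 := Complex.ofReal_ne_zero.mpr Real.pi_ne_zero
  rw [theta1_eq, theta1_eq]
  have h1 : ((z + (Real.pi : ℂ)) / Real.pi + τ / 2 + 1 / 2 : ℂ)
      = (z / Real.pi + τ / 2 + 1 / 2) + 1 := by field_simp; ring
  have h2 : Complex.exp (Real.pi * Complex.I * τ / 4 + Complex.I * (z + Real.pi))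
      = -Complex.exp (Real.pi * Complex.I * τ / 4 + Complex.I * z) := by
    rw [show (Real.pi * Complex.I * τ / 4 + Complex.I * (z + Real.pi) : ℂ)
        = (Real.pi * Complex.I * τ / 4 + Complex.I * z) + Real.pi * Complex.I by ring,
      Complex.exp_add, Complex.exp_pi_mul_I]
    ring
  rw [h1, jacobiTheta₂_add_left, h2]
  ring

set_option maxHeartbeats 1000000 in
open MeasureTheory in
lemma exists_jacobiTheta₂_ne_zero {τ : ℂ} (hτ : 0 < τ.im) :
    ∃ x : ℝ, jacobiTheta₂ (x : ℂ) τ ≠ 0 := by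
  by_contra hcon
  push_neg at hcon
  have hmeas : ∀ n : ℤ, AEStronglyMeasurable (fun x : ℝ => jacobiTheta₂_term n (x : ℂ) τ)
      (volume.restrict (Set.Ioc (0 : ℝ) 1)) := by
    intro n
    apply Continuous.aestronglyMeasurable
    unfold jacobiTheta₂_term
    fun_prop
  have hbound : ∀ (n : ℤ) (x : ℝ), ‖jacobiTheta₂_term n (x : ℂ) τ‖ ≤ Real.exp (-Real.pi * (τ.im * (n : ℝ) ^ 2 - 2 * 0 * ((|n| : ℤ) : ℝ))) := fun n x =>
    norm_jacobiTheta₂_term_le (S := 0) (T := τ.im) hτ (z := (x:ℂ)) (by simp) le_rfl n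
  have hsum : Summable (fun n : ℤ => Real.exp (-Real.pi * (τ.im * (n : ℝ) ^ 2 - 2 * 0 * ((|n| : ℤ) : ℝ)))) := by
    simpa using summable_pow_mul_jacobiTheta₂_term_bound 0 hτ 0
  have hlint : (∑' n : ℤ, ∫⁻ x in Set.Ioc (0 : ℝ) 1, ‖jacobiTheta₂_term n (x : ℂ) τ‖₊) ≠ ⊤ := by
    have hle : (∑' n : ℤ, ∫⁻ x in Set.Ioc (0 : ℝ) 1, ‖jacobiTheta₂_term n (x : ℂ) τ‖₊)
        ≤ ∑' n : ℤ, ENNReal.ofReal (Real.exp (-Real.pi * (τ.im * (n : ℝ) ^ 2 - 2 * 0 * ((|n| : ℤ) : ℝ)))) := by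
      refine ENNReal.tsum_le_tsum fun n => ?_
      calc ∫⁻ x in Set.Ioc (0 : ℝ) 1, ‖jacobiTheta₂_term n (x : ℂ) τ‖₊
          ≤ ∫⁻ _ in Set.Ioc (0 : ℝ) 1, ENNReal.ofReal (Real.exp (-Real.pi * (τ.im * (n : ℝ) ^ 2 - 2 * 0 * ((|n| : ℤ) : ℝ)))) := by
            refine lintegral_mono fun x => ?_
            rw [← enorm_eq_nnnorm, ← ofReal_norm]
            exact ENNReal.ofReal_le_ofReal (hbound n x)
        _ = ENNReal.ofReal (Real.exp (-Real.pi * (τ.im * (n : ℝ) ^ 2 - 2 * 0 * ((|n| : ℤ) : ℝ)))) := by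
            rw [MeasureTheory.lintegral_const, Measure.restrict_apply_univ, Real.volume_Ioc]
            norm_num
    refine ne_top_of_le_ne_top ?_ hle
    rw [← ENNReal.ofReal_tsum_of_nonneg (fun n => (Real.exp_nonneg _)) hsum]
    exact ENNReal.ofReal_ne_top
  have hval : ∀ n : ℤ, (∫ x in Set.Ioc (0 : ℝ) 1, jacobiTheta₂_term n (x : ℂ) τ)
      = if n = 0 then 1 else 0 := by
    intro n
    rw [← intervalIntegral.integral_of_le zero_le_one]
    by_cases hn : n = 0
    · subst hn
      simp [jacobiTheta₂_term]
    · have h1 : ∀ x : ℝ, jacobiTheta₂_term n (x : ℂ) τ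
          = Complex.exp (Real.pi * Complex.I * (n : ℂ) ^ 2 * τ)
            * Complex.exp ((2 * Real.pi * Complex.I * (n : ℂ)) * (x : ℂ)) := by
        intro x
        rw [jacobiTheta₂_term, ← Complex.exp_add]
        exact congrArg Complex.exp (by ring)
      have hc : (2 * Real.pi * Complex.I * (n : ℂ)) ≠ 0 := by
        simp [Real.pi_ne_zero, Complex.I_ne_zero, hn]
      simp_rw [h1]
      rw [intervalIntegral.integral_const_mul, integral_exp_mul_complex hc]
      rw [show (2 * (Real.pi : ℂ) * Complex.I * (n : ℂ) * (1 : ℝ) : ℂ)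
          = (n : ℂ) * (2 * Real.pi * Complex.I) by push_cast; ring,
        Complex.exp_int_mul_two_pi_mul_I]
      simp [hn]
  have key := MeasureTheory.integral_tsum hmeas hlint
  have h0 : (0 : ℂ) = ∑' n : ℤ, ∫ x in Set.Ioc (0 : ℝ) 1, jacobiTheta₂_term n (x : ℂ) τ := by
    rw [← key]
    have : ∀ x : ℝ, (∑' n : ℤ, jacobiTheta₂_term n (x : ℂ) τ) = 0 := fun x => hcon x
    simp only [this]
    simp
  rw [tsum_congr hval, tsum_ite_eq] at h0
  exact one_ne_zero h0.symm

lemma exists_theta1_ne_zero {τ : ℂ} (hτ : 0 < τ.im) : ∃ w : ℂ, theta1 w τ ≠ 0 := by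
  obtain ⟨x, hx⟩ := exists_jacobiTheta₂_ne_zero hτ
  refine ⟨(Real.pi : ℂ) * ((x : ℂ) - τ / 2 - 1 / 2), ?_⟩
  have hπ : (Real.pi : ℂ) ≠ 0 := Complex.ofReal_ne_zero.mpr Real.pi_ne_zero
  rw [theta1_eq]
  have harg : ((Real.pi : ℂ) * ((x : ℂ) - τ / 2 - 1 / 2)) / Real.pi + τ / 2 + 1 / 2 = (x : ℂ) := by
    field_simp
    ring
  rw [harg]
  exact mul_ne_zero (mul_ne_zero (neg_ne_zero.mpr Complex.I_ne_zero) (Complex.exp_ne_zero _)) hx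

/-- The functions `θ₁(3z|3τ)`, `e^{2iz} θ₁(3z+πτ|3τ)` and `e^{-2iz} θ₁(3z-πτ|3τ)`
are linearly independent over ℂ. -/
theorem theta1_linearly_independent (τ : ℂ) (hτ : 0 < τ.im) (c₁ c₂ c₃ : ℂ)
    (h : ∀ z : ℂ,
      c₁ * theta1 (3 * z) (3 * τ)
        + c₂ * Complex.exp (2 * Complex.I * z) * theta1 (3 * z + Real.pi * τ) (3 * τ)
        + c₃ * Complex.exp (-2 * Complex.I * z) * theta1 (3 * z - Real.pi * τ) (3 * τ) = 0) :
    c₁ = 0 ∧ c₂ = 0 ∧ c₃ = 0 := by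
  have hτ3 : 0 < (3 * τ).im := by
    have : (3 * τ).im = 3 * τ.im := by simp
    rw [this]; linarith
  set ω : ℂ := Complex.exp (2 * Real.pi * Complex.I / 3) with hω
  have hw3 : ω ^ 3 = 1 := by
    rw [hω, ← Complex.exp_nat_mul]
    rw [show (((3:ℕ) : ℂ)) * (2 * Real.pi * Complex.I / 3) = 2 * Real.pi * Complex.I by
        push_cast; ring,
      Complex.exp_two_pi_mul_I]
  have hw1 : ω ≠ 1 := by
    intro hcon
    rw [hω] at hcon
    rw [Complex.exp_eq_one_iff] at hcon
    obtain ⟨n, hn⟩ := hcon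
    have hI : (2 * (Real.pi : ℂ) * Complex.I) ≠ 0 := by
      simp [Real.pi_ne_zero, Complex.I_ne_zero]
    have hcan : ((3 * n : ℤ) : ℂ) * (2 * (Real.pi : ℂ) * Complex.I)
        = 1 * (2 * (Real.pi : ℂ) * Complex.I) := by
      push_cast
      linear_combination -3 * hn
    have h31 : ((3 * n : ℤ) : ℂ) = 1 := mul_right_cancel₀ hI hcan
    have : (3 * n : ℤ) = 1 := by exact_mod_cast h31
    omega
  have hw0 : 1 + ω + ω ^ 2 = 0 := by
    have hfac : (ω - 1) * (1 + ω + ω ^ 2) = 0 := by linear_combination hw3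
    rcases mul_eq_zero.mp hfac with h' | h'
    · exact absurd (sub_eq_zero.mp h') hw1
    · exact h'
  -- the inverse factor
  have hni : Complex.exp (-(2 * (Real.pi:ℂ) * Complex.I) / 3) = ω ^ 2 := by
    rw [show (-(2 * (Real.pi:ℂ) * Complex.I) / 3)
        = 2 * (Real.pi:ℂ) * Complex.I / 3 + 2 * (Real.pi:ℂ) * Complex.I / 3
          + -(2 * (Real.pi:ℂ) * Complex.I) by ring,
      Complex.exp_add, Complex.exp_add, Complex.exp_neg, Complex.exp_two_pi_mul_I]
    rw [hω]; ring
  -- one-step shift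
  have step : ∀ d₁ d₂ d₃ : ℂ,
      (∀ z : ℂ, d₁ * theta1 (3 * z) (3 * τ)
        + d₂ * Complex.exp (2 * Complex.I * z) * theta1 (3 * z + Real.pi * τ) (3 * τ)
        + d₃ * Complex.exp (-2 * Complex.I * z) * theta1 (3 * z - Real.pi * τ) (3 * τ) = 0) →
      (∀ z : ℂ, (-d₁) * theta1 (3 * z) (3 * τ)
        + (-(ω * d₂)) * Complex.exp (2 * Complex.I * z) * theta1 (3 * z + Real.pi * τ) (3 * τ)
        + (-(ω ^ 2 * d₃)) * Complex.exp (-2 * Complex.I * z)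
            * theta1 (3 * z - Real.pi * τ) (3 * τ) = 0) := by
    intro d₁ d₂ d₃ H z
    have hA : theta1 (3 * (z + (Real.pi : ℂ) / 3)) (3 * τ) = -theta1 (3 * z) (3 * τ) := by
      rw [show (3 : ℂ) * (z + (Real.pi : ℂ) / 3) = 3 * z + (Real.pi : ℂ) by ring]
      exact theta1_add_pi _ _
    have hB : theta1 (3 * (z + (Real.pi : ℂ) / 3) + Real.pi * τ) (3 * τ)
        = -theta1 (3 * z + Real.pi * τ) (3 * τ) := by
      rw [show (3 : ℂ) * (z + (Real.pi : ℂ) / 3) + Real.pi * τ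
          = (3 * z + Real.pi * τ) + (Real.pi : ℂ) by ring]
      exact theta1_add_pi _ _
    have hC : theta1 (3 * (z + (Real.pi : ℂ) / 3) - Real.pi * τ) (3 * τ)
        = -theta1 (3 * z - Real.pi * τ) (3 * τ) := by
      rw [show (3 : ℂ) * (z + (Real.pi : ℂ) / 3) - Real.pi * τ
          = (3 * z - Real.pi * τ) + (Real.pi : ℂ) by ring]
      exact theta1_add_pi _ _
    have hD : Complex.exp (2 * Complex.I * (z + (Real.pi : ℂ) / 3))
        = Complex.exp (2 * Complex.I * z) * ω := by
      rw [show 2 * Complex.I * (z + (Real.pi : ℂ) / 3)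
          = 2 * Complex.I * z + 2 * (Real.pi:ℂ) * Complex.I / 3 by ring,
        Complex.exp_add, hω]
    have hE : Complex.exp (-2 * Complex.I * (z + (Real.pi : ℂ) / 3))
        = Complex.exp (-2 * Complex.I * z) * ω ^ 2 := by
      rw [show -2 * Complex.I * (z + (Real.pi : ℂ) / 3)
          = -2 * Complex.I * z + -(2 * (Real.pi:ℂ) * Complex.I) / 3 by ring,
        Complex.exp_add, hni]
    have H' := H (z + (Real.pi : ℂ) / 3)
    rw [hA, hB, hC, hD, hE] at H'
    linear_combination H'
  have k2 := step c₁ c₂ c₃ h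
  have k3 := step _ _ _ k2
  -- extraction
  have g1 : ∀ w : ℂ, c₁ * theta1 w (3 * τ) = 0 := by
    intro w
    have e1 := h (w / 3)
    have e2 := k2 (w / 3)
    have e3 := k3 (w / 3)
    rw [show (3 : ℂ) * (w / 3) = w by ring] at e1 e2 e3
    linear_combination (e1 - e2 + e3) / 3
      - (c₂ * Complex.exp (2 * Complex.I * (w/3)) * theta1 (w + Real.pi * τ) (3 * τ) / 3) * hw0
      - (c₃ * Complex.exp (-2 * Complex.I * (w/3)) * theta1 (w - Real.pi * τ) (3 * τ) / 3) * hw0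
      - (c₃ * Complex.exp (-2 * Complex.I * (w/3)) * theta1 (w - Real.pi * τ) (3 * τ) * ω / 3) * hw3
  have g2 : ∀ w : ℂ, c₂ * theta1 w (3 * τ) = 0 := by
    intro w
    set z := (w - Real.pi * τ) / 3 with hz
    have e1 := h z
    have e2 := k2 z
    have e3 := k3 z
    rw [show (3 : ℂ) * z + Real.pi * τ = w by rw [hz]; ring] at e1 e2 e3
    have key : c₂ * Complex.exp (2 * Complex.I * z) * theta1 w (3 * τ) = 0 := by
      linear_combination (e1 - ω^2 * e2 + ω * e3) / 3
        - (c₁ * theta1 (3 * z) (3 * τ) / 3) * hw0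
        - (2 * c₂ * Complex.exp (2 * Complex.I * z) * theta1 w (3 * τ) / 3) * hw3
        - (c₃ * Complex.exp (-2 * Complex.I * z) * theta1 (3 * z - Real.pi * τ) (3 * τ) / 3) * hw0
        - (c₃ * Complex.exp (-2 * Complex.I * z) * theta1 (3 * z - Real.pi * τ) (3 * τ)
            * (ω + ω^2) / 3) * hw3
    rcases mul_eq_zero.mp key with h' | h'
    · rcases mul_eq_zero.mp h' with h'' | h''
      · rw [h'']; ring
      · exact absurd h'' (Complex.exp_ne_zero _)
    · rw [h']; ring
  have g3 : ∀ w : ℂ, c₃ * theta1 w (3 * τ) = 0 := by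
    intro w
    set z := (w + Real.pi * τ) / 3 with hz
    have e1 := h z
    have e2 := k2 z
    have e3 := k3 z
    rw [show (3 : ℂ) * z - Real.pi * τ = w by rw [hz]; ring] at e1 e2 e3
    have key : c₃ * Complex.exp (-2 * Complex.I * z) * theta1 w (3 * τ) = 0 := by
      linear_combination (e1 - ω * e2 + ω^2 * e3) / 3
        - (c₁ * theta1 (3 * z) (3 * τ) / 3) * hw0
        - (c₂ * Complex.exp (2 * Complex.I * z) * theta1 (3 * z + Real.pi * τ) (3 * τ) / 3) * hw0
        - (c₂ * Complex.exp (2 * Complex.I * z) * theta1 (3 * z + Real.pi * τ) (3 * τ)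
            * ω / 3) * hw3
        - (c₃ * Complex.exp (-2 * Complex.I * z) * theta1 w (3 * τ)
            * (2 + ω^3) / 3) * hw3
    rcases mul_eq_zero.mp key with h' | h'
    · rcases mul_eq_zero.mp h' with h'' | h''
      · rw [h'']; ring
      · exact absurd h'' (Complex.exp_ne_zero _)
    · rw [h']; ring
  obtain ⟨w₀, hw₀⟩ := exists_theta1_ne_zero hτ3
  refine ⟨?_, ?_, ?_⟩
  · rcases mul_eq_zero.mp (g1 w₀) with h' | h'
    · exact h'
    · exact absurd h' hw₀
  · rcases mul_eq_zero.mp (g2 w₀) with h' | h'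
    · exact h'
    · exact absurd h' hw₀
  · rcases mul_eq_zero.mp (g3 w₀) with h' | h'
    · exact h'
    · exact absurd h' hw₀
end

section
/- Let τ ∈ ℂ with Im τ > 0 and let x, y, z ∈ ℂ. Then θ₁(z+x|τ)·θ₁(z+y|τ)·θ₁(z−x−y|τ) = −A(x,y|τ)·θ₁(3z|3τ) + exp(iπτ/3)·C(−x,−y|τ)·exp(2iz)·θ₁(3z+πτ|3τ) + exp(iπτ/3)·C(x,y|τ)·exp(−2iz)·θ₁(3z−πτ|3τ). -/
open Complex

/-- The theta series A(x,y|τ). -/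
noncomputable def Afun (x y τ : ℂ) : ℂ :=
  ∑' k : ℤ, ∑' l : ℤ,
    Complex.exp (2 * Complex.I * Real.pi * τ * ((k : ℂ) ^ 2 + (k : ℂ) * (l : ℂ) + (l : ℂ) ^ 2)) *
    Complex.exp (2 * Complex.I * x * (2 * (l : ℂ) + (k : ℂ))) *
    Complex.exp (2 * Complex.I * y * (2 * (k : ℂ) + (l : ℂ)))

/-- The theta series C(x,y|τ). -/
noncomputable def Cfun (x y τ : ℂ) : ℂ :=
  Complex.exp (2 * Complex.I * (x + y)) * ∑' k : ℤ, ∑' l : ℤ,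
    Complex.exp (2 * Complex.I * Real.pi * τ *
      ((k : ℂ) ^ 2 + (k : ℂ) * (l : ℂ) + (l : ℂ) ^ 2 + (k : ℂ) + (l : ℂ) + 1 / 3)) *
    Complex.exp (2 * Complex.I * x * (2 * (l : ℂ) + (k : ℂ))) *
    Complex.exp (2 * Complex.I * y * (2 * (k : ℂ) + (l : ℂ)))

/-! ### Auxiliary definitions -/

/-- Single term of the θ₁ series. -/
noncomputable def T1t (w τ : ℂ) (n : ℤ) : ℂ :=
  (-1 : ℂ) ^ n * Complex.exp (Real.pi * Complex.I * τ * (2 * (n : ℂ) + 1) ^ 2 / 4) *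
    Complex.exp ((2 * (n : ℂ) + 1) * Complex.I * w)

/-- Single term of the A series. -/
noncomputable def At (x y τ : ℂ) (k l : ℤ) : ℂ :=
  Complex.exp (2 * Complex.I * Real.pi * τ * ((k : ℂ) ^ 2 + (k : ℂ) * (l : ℂ) + (l : ℂ) ^ 2)) *
    Complex.exp (2 * Complex.I * x * (2 * (l : ℂ) + (k : ℂ))) *
    Complex.exp (2 * Complex.I * y * (2 * (k : ℂ) + (l : ℂ)))

/-- Single term of the C series (without the prefactor). -/
noncomputable def Ct (x y τ : ℂ) (k l : ℤ) : ℂ :=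
  Complex.exp (2 * Complex.I * Real.pi * τ *
      ((k : ℂ) ^ 2 + (k : ℂ) * (l : ℂ) + (l : ℂ) ^ 2 + (k : ℂ) + (l : ℂ) + 1 / 3)) *
    Complex.exp (2 * Complex.I * x * (2 * (l : ℂ) + (k : ℂ))) *
    Complex.exp (2 * Complex.I * y * (2 * (k : ℂ) + (l : ℂ)))

/-- The product term over `ℤ³`. -/
noncomputable def Gt (x y z τ : ℂ) (p : ℤ × ℤ × ℤ) : ℂ :=
  T1t (z + x) τ p.1 * (T1t (z + y) τ p.2.1 * T1t (z - x - y) τ p.2.2)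

lemma theta1_eq' (w τ : ℂ) : theta1 w τ = -Complex.I * ∑' n : ℤ, T1t w τ n := rfl

lemma Afun_eq' (x y τ : ℂ) : Afun x y τ = ∑' k : ℤ, ∑' l : ℤ, At x y τ k l := rfl

lemma Cfun_eq' (x y τ : ℂ) :
    Cfun x y τ = Complex.exp (2 * Complex.I * (x + y)) * ∑' k : ℤ, ∑' l : ℤ, Ct x y τ k l := rfl

lemma negone_zpow_eq (n : ℤ) : (-1 : ℂ) ^ n = Complex.exp ((n : ℂ) * (Real.pi * Complex.I)) := by
  rw [Complex.exp_int_mul, Complex.exp_pi_mul_I]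

lemma T1t_eq (w τ : ℂ) (n : ℤ) :
    T1t w τ n = Complex.exp (Real.pi * Complex.I * τ / 4 + Complex.I * w) *
      jacobiTheta₂_term n ((1 + τ) / 2 + w / Real.pi) τ := by
  rw [T1t, jacobiTheta₂_term, negone_zpow_eq, ← Complex.exp_add, ← Complex.exp_add,
    ← Complex.exp_add]
  congr 1
  have hπ : (Real.pi : ℂ) ≠ 0 := Complex.ofReal_ne_zero.2 Real.pi_ne_zero
  field_simp
  ring

lemma summable_norm_T1t {τ : ℂ} (hτ : 0 < τ.im) (w : ℂ) :
    Summable fun n : ℤ => ‖T1t w τ n‖ := by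
  simp only [T1t_eq, norm_mul]
  apply Summable.mul_left
  have h := summable_pow_mul_jacobiTheta₂_term_bound |((1 + τ) / 2 + w / (Real.pi : ℂ)).im| hτ 0
  refine h.of_nonneg_of_le (fun n => norm_nonneg _) (fun n => ?_)
  simpa only [pow_zero, one_mul] using norm_jacobiTheta₂_term_le hτ le_rfl le_rfl n

/-- Residue shifts. -/
def rho : Fin 3 → ℤ
  | 0 => 0
  | 1 => 1
  | 2 => -1

/-- The reindexing of `ℤ³` by congruence classes of the sum mod 3. -/
def e3 : (Fin 3 × (ℤ × ℤ × ℤ)) ≃ (ℤ × ℤ × ℤ) where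
  toFun q := (q.2.1 + q.2.2.2, q.2.1 + q.2.2.1, q.2.1 - q.2.2.1 - q.2.2.2 + rho q.1)
  invFun n :=
    if (n.1 + n.2.1 + n.2.2) % 3 = 0 then
      (0, ((n.1 + n.2.1 + n.2.2) / 3, n.2.1 - (n.1 + n.2.1 + n.2.2) / 3,
        n.1 - (n.1 + n.2.1 + n.2.2) / 3))
    else if (n.1 + n.2.1 + n.2.2) % 3 = 1 then
      (1, ((n.1 + n.2.1 + n.2.2 - 1) / 3, n.2.1 - (n.1 + n.2.1 + n.2.2 - 1) / 3,
        n.1 - (n.1 + n.2.1 + n.2.2 - 1) / 3))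
    else
      (2, ((n.1 + n.2.1 + n.2.2 + 1) / 3, n.2.1 - (n.1 + n.2.1 + n.2.2 + 1) / 3,
        n.1 - (n.1 + n.2.1 + n.2.2 + 1) / 3))
  left_inv := by
    rintro ⟨r, m, a, b⟩
    fin_cases r <;>
      dsimp only [rho] <;>
      split_ifs with h h' <;>
      first
        | (exfalso; omega)
        | (refine Prod.ext ?_ (Prod.ext ?_ (Prod.ext ?_ ?_)) <;>
            first | rfl | decide | (dsimp only; omega))
  right_inv := by
    rintro ⟨n₁, n₂, n₃⟩
    dsimp only
    split_ifs with h h' <;>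
      refine Prod.ext ?_ (Prod.ext ?_ ?_) <;>
      dsimp only [rho] <;>
      omega

/-! ### Pointwise identities for the three congruence classes -/

lemma class0 (τ x y z : ℂ) (m K L : ℤ) :
    Gt x y z τ (e3 (0, (m, K, L))) = T1t (3 * z) (3 * τ) m * At x y τ K L := by
  show T1t (z + x) τ (m + L) * (T1t (z + y) τ (m + K) * T1t (z - x - y) τ (m - K - L + 0)) = _
  simp only [T1t, At, negone_zpow_eq, ← Complex.exp_add]
  rw [Complex.exp_eq_exp_iff_exists_int]
  exact ⟨m, by push_cast; ring⟩

lemma class1 (τ x y z : ℂ) (m K L : ℤ) :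
    Gt x y z τ (e3 (1, (m, K, L))) =
      Complex.exp (Real.pi * Complex.I) * Complex.exp (Real.pi * Complex.I * τ / 3) *
        Complex.exp (2 * Complex.I * (-x + -y)) * Complex.exp (2 * Complex.I * z) *
        (T1t (3 * z + Real.pi * τ) (3 * τ) m * Ct (-x) (-y) τ (-K) (-L)) := by
  show T1t (z + x) τ (m + L) * (T1t (z + y) τ (m + K) * T1t (z - x - y) τ (m - K - L + 1)) = _
  simp only [T1t, Ct, negone_zpow_eq, ← Complex.exp_add]
  rw [Complex.exp_eq_exp_iff_exists_int]
  exact ⟨m, by push_cast; ring⟩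

lemma class2 (τ x y z : ℂ) (m K L : ℤ) :
    Gt x y z τ (e3 (2, (m, K, L))) =
      Complex.exp (Real.pi * Complex.I) * Complex.exp (Real.pi * Complex.I * τ / 3) *
        Complex.exp (2 * Complex.I * (x + y)) * Complex.exp (-2 * Complex.I * z) *
        (T1t (3 * z - Real.pi * τ) (3 * τ) m * Ct x y τ K L) := by
  show T1t (z + x) τ (m + L) * (T1t (z + y) τ (m + K) * T1t (z - x - y) τ (m - K - L + -1)) = _
  simp only [T1t, Ct, negone_zpow_eq, ← Complex.exp_add]
  rw [Complex.exp_eq_exp_iff_exists_int]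
  exact ⟨m - 1, by push_cast; ring⟩

/-- Negation reindexing for double sums. -/
lemma tsum_neg_neg (f : ℤ → ℤ → ℂ) :
    (∑' k : ℤ, ∑' l : ℤ, f k l) = ∑' k : ℤ, ∑' l : ℤ, f (-k) (-l) := by
  rw [← (Equiv.neg ℤ).tsum_eq (fun k => ∑' l : ℤ, f k l)]
  refine tsum_congr fun k => ?_
  rw [← (Equiv.neg ℤ).tsum_eq (fun l => f _ l)]
  rfl
/-- Three-term theta expansion of the product `θ₁(z+x)θ₁(z+y)θ₁(z-x-y)`. -/
theorem theta1_product_expansion (τ : ℂ) (hτ : 0 < τ.im) (x y z : ℂ) :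
    theta1 (z + x) τ * theta1 (z + y) τ * theta1 (z - x - y) τ
      = -Afun x y τ * theta1 (3 * z) (3 * τ)
        + Complex.exp (Real.pi * Complex.I * τ / 3) * Cfun (-x) (-y) τ *
            Complex.exp (2 * Complex.I * z) * theta1 (3 * z + Real.pi * τ) (3 * τ)
        + Complex.exp (Real.pi * Complex.I * τ / 3) * Cfun x y τ *
            Complex.exp (-2 * Complex.I * z) * theta1 (3 * z - Real.pi * τ) (3 * τ) := by
  have hf1 := summable_norm_T1t hτ (z + x)
  have hf2 := summable_norm_T1t hτ (z + y)
  have hf3 := summable_norm_T1t hτ (z - x - y)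
  have hpair : Summable fun p : ℤ × ℤ => ‖T1t (z + y) τ p.1 * T1t (z - x - y) τ p.2‖ :=
    hf2.mul_norm hf3
  have hG : Summable (Gt x y z τ) :=
    summable_mul_of_summable_norm (f := fun n : ℤ => T1t (z + x) τ n)
      (g := fun p : ℤ × ℤ => T1t (z + y) τ p.1 * T1t (z - x - y) τ p.2) hf1 hpair
  have hGe : Summable fun q : Fin 3 × (ℤ × ℤ × ℤ) => Gt x y z τ (e3 q) :=
    e3.summable_iff.mpr hG
  -- the left-hand side as a sum over ℤ³
  have lhs_eq : theta1 (z + x) τ * theta1 (z + y) τ * theta1 (z - x - y) τ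
      = Complex.I * ∑' p : ℤ × ℤ × ℤ, Gt x y z τ p := by
    rw [theta1_eq', theta1_eq', theta1_eq',
      show (-Complex.I * ∑' n : ℤ, T1t (z + x) τ n) * (-Complex.I * ∑' n : ℤ, T1t (z + y) τ n) *
          (-Complex.I * ∑' n : ℤ, T1t (z - x - y) τ n)
        = Complex.I * ((∑' n : ℤ, T1t (z + x) τ n) *
            ((∑' n : ℤ, T1t (z + y) τ n) * ∑' n : ℤ, T1t (z - x - y) τ n)) by
        linear_combination (-Complex.I * ((∑' n : ℤ, T1t (z + x) τ n) *
          ((∑' n : ℤ, T1t (z + y) τ n) * ∑' n : ℤ, T1t (z - x - y) τ n))) * Complex.I_mul_I,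
      tsum_mul_tsum_of_summable_norm hf2 hf3,
      tsum_mul_tsum_of_summable_norm (f := fun n : ℤ => T1t (z + x) τ n)
        (g := fun p : ℤ × ℤ => T1t (z + y) τ p.1 * T1t (z - x - y) τ p.2) hf1 hpair]
    rfl
  -- each congruence class as an iterated triple sum
  have iter : ∀ r : Fin 3, (∑' p : ℤ × ℤ × ℤ, Gt x y z τ (e3 (r, p)))
      = ∑' m : ℤ, ∑' K : ℤ, ∑' L : ℤ, Gt x y z τ (e3 (r, (m, K, L))) := by
    intro r
    have hr : Summable fun p : ℤ × ℤ × ℤ => Gt x y z τ (e3 (r, p)) := hGe.prod_factor r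
    rw [Summable.tsum_prod hr]
    exact tsum_congr fun m => Summable.tsum_prod (hr.prod_factor m)
  -- split the full sum according to the class mod 3
  have split_eq : (∑' p : ℤ × ℤ × ℤ, Gt x y z τ p)
      = (∑' m : ℤ, ∑' K : ℤ, ∑' L : ℤ, Gt x y z τ (e3 (0, (m, K, L))))
        + (∑' m : ℤ, ∑' K : ℤ, ∑' L : ℤ, Gt x y z τ (e3 (1, (m, K, L))))
        + (∑' m : ℤ, ∑' K : ℤ, ∑' L : ℤ, Gt x y z τ (e3 (2, (m, K, L)))) := by
    calc (∑' p : ℤ × ℤ × ℤ, Gt x y z τ p)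
        = ∑' q : Fin 3 × (ℤ × ℤ × ℤ), Gt x y z τ (e3 q) := (e3.tsum_eq (Gt x y z τ)).symm
      _ = ∑ r : Fin 3, ∑' p : ℤ × ℤ × ℤ, Gt x y z τ (e3 (r, p)) := by
          rw [Summable.tsum_prod hGe, tsum_fintype]
      _ = (∑' p : ℤ × ℤ × ℤ, Gt x y z τ (e3 (0, p)))
            + (∑' p : ℤ × ℤ × ℤ, Gt x y z τ (e3 (1, p)))
            + (∑' p : ℤ × ℤ × ℤ, Gt x y z τ (e3 (2, p))) := Fin.sum_univ_three _
      _ = _ := by rw [iter 0, iter 1, iter 2]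
  -- identify each class
  have h0 : (∑' m : ℤ, ∑' K : ℤ, ∑' L : ℤ, Gt x y z τ (e3 (0, (m, K, L))))
      = (∑' m : ℤ, T1t (3 * z) (3 * τ) m) * ∑' k : ℤ, ∑' l : ℤ, At x y τ k l := by
    refine Eq.trans (tsum_congr fun m => tsum_congr fun K => tsum_congr fun L =>
      class0 τ x y z m K L) ?_
    simp only [tsum_mul_left, tsum_mul_right]
  have h1 : (∑' m : ℤ, ∑' K : ℤ, ∑' L : ℤ, Gt x y z τ (e3 (1, (m, K, L))))
      = Complex.exp (Real.pi * Complex.I) * Complex.exp (Real.pi * Complex.I * τ / 3) *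
          Complex.exp (2 * Complex.I * (-x + -y)) * Complex.exp (2 * Complex.I * z) *
          ((∑' m : ℤ, T1t (3 * z + Real.pi * τ) (3 * τ) m) *
            ∑' k : ℤ, ∑' l : ℤ, Ct (-x) (-y) τ (-k) (-l)) := by
    refine Eq.trans (tsum_congr fun m => tsum_congr fun K => tsum_congr fun L =>
      class1 τ x y z m K L) ?_
    simp only [tsum_mul_left, tsum_mul_right]
  have h2 : (∑' m : ℤ, ∑' K : ℤ, ∑' L : ℤ, Gt x y z τ (e3 (2, (m, K, L))))
      = Complex.exp (Real.pi * Complex.I) * Complex.exp (Real.pi * Complex.I * τ / 3) *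
          Complex.exp (2 * Complex.I * (x + y)) * Complex.exp (-2 * Complex.I * z) *
          ((∑' m : ℤ, T1t (3 * z - Real.pi * τ) (3 * τ) m) *
            ∑' k : ℤ, ∑' l : ℤ, Ct x y τ k l) := by
    refine Eq.trans (tsum_congr fun m => tsum_congr fun K => tsum_congr fun L =>
      class2 τ x y z m K L) ?_
    simp only [tsum_mul_left, tsum_mul_right]
  rw [lhs_eq, split_eq, h0, h1, h2,
    theta1_eq' (3 * z) (3 * τ), theta1_eq' (3 * z + Real.pi * τ) (3 * τ),
    theta1_eq' (3 * z - Real.pi * τ) (3 * τ), Afun_eq', Cfun_eq' (-x) (-y) τ, Cfun_eq' x y τ,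
    tsum_neg_neg (Ct (-x) (-y) τ), Complex.exp_pi_mul_I]
  ring
end
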